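/- arXiv:2406.05759 — 3 statements merged into one kernel-verified Lean document; each statement's English description precedes it below -/
import Mathlib

section
/- Let q > 1 real and let \mu_q be the probability measure on \mathbb{R} with density (1/(2\pi))(q+1)\sqrt{4-x^2}/((q^{-1/2}+q^{1/2})^2-x^2) on [-2,2]. Then for every natural number r, \int X_r d\mu_q = q^{-r/2} if r is even, and 0 if r is odd, where X_r(x) = U_r(x/2). -/
open MeasureTheory
open scoped Real ENNReal NNReal

noncomputable def vietaFibR : ℕ → ℝ → ℝ
  | 0, _ => 1
  | 1, x => x
  | (r + 2), x => x * vietaFibR (r + 1) x - vietaFibR r x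

lemma vf_cos (r : ℕ) (θ : ℝ) :
    vietaFibR r (2 * Real.cos θ) * Real.sin θ = Real.sin ((r + 1) * θ) := by
  induction r using Nat.twoStepInduction with
  | zero => simp [vietaFibR]
  | one =>
    simp only [vietaFibR]
    rw [show ((1:ℕ)+1:ℝ)*θ = 2*θ by push_cast; ring, Real.sin_two_mul]; ring
  | more r ih1 ih2 =>
    have h1 : ((r + 2 : ℕ) + 1 : ℝ) * θ = ((r + 1 : ℕ) + 1) * θ + θ := by push_cast; ring
    have h2 : ((r : ℕ) + 1 : ℝ) * θ = ((r + 1 : ℕ) + 1) * θ - θ := by push_cast; ring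
    rw [show vietaFibR (r + 2) (2 * Real.cos θ) =
        2 * Real.cos θ * vietaFibR (r + 1) (2 * Real.cos θ) - vietaFibR r (2 * Real.cos θ)
      from rfl, h1, Real.sin_add]
    rw [h2, Real.sin_sub] at ih1
    linear_combination (2 * Real.cos θ) * ih2 - ih1

lemma sin_nat_bound (n : ℕ) (θ : ℝ) : |Real.sin (n * θ)| ≤ n * |Real.sin θ| := by
  induction n with
  | zero => simp
  | succ n ih =>
    have : ((n : ℝ) + 1) * θ = n * θ + θ := by ring
    push_cast
    rw [this, Real.sin_add]
    calc |Real.sin (n*θ) * Real.cos θ + Real.cos (n*θ) * Real.sin θ|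
        ≤ |Real.sin (n*θ) * Real.cos θ| + |Real.cos (n*θ) * Real.sin θ| := abs_add_le _ _
      _ ≤ |Real.sin (n*θ)| * 1 + 1 * |Real.sin θ| := by
          rw [abs_mul, abs_mul]
          gcongr <;> [exact Real.abs_cos_le_one θ; exact Real.abs_cos_le_one _]
      _ ≤ n * |Real.sin θ| + 1 * |Real.sin θ| := by rw [mul_one]; gcongr
      _ = (n + 1) * |Real.sin θ| := by ring

lemma vf_bound (r : ℕ) {x : ℝ} (hx : x ∈ Set.Ioo (-2 : ℝ) 2) :
    |vietaFibR r x| ≤ r + 1 := by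
  obtain ⟨h1, h2⟩ := hx
  set θ := Real.arccos (x / 2) with hθ
  have hx2 : x / 2 ∈ Set.Ioo (-1 : ℝ) 1 := by constructor <;> nlinarith
  have hcos : 2 * Real.cos θ = x := by
    rw [hθ, Real.cos_arccos (by linarith [hx2.1]) (by linarith [hx2.2])]; ring
  have hs : 0 < Real.sin θ := by
    rw [hθ, Real.sin_arccos]
    exact Real.sqrt_pos.2 (by nlinarith)
  have key := vf_cos r θ
  rw [hcos] at key
  have : |vietaFibR r x| * Real.sin θ = |Real.sin ((r+1) * θ)| := by
    rw [← key, abs_mul, abs_of_pos hs]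
  have hb := sin_nat_bound (r+1) θ
  push_cast at hb
  rw [abs_of_pos hs] at hb
  have := this.le
  nlinarith [abs_nonneg (vietaFibR r x)]

lemma vf_cont (r : ℕ) : Continuous (vietaFibR r) := by
  induction r using Nat.twoStepInduction with
  | zero => simpa [vietaFibR] using continuous_const
  | one => simpa [vietaFibR] using continuous_id'
  | more r ih1 ih2 =>
    show Continuous fun x => x * vietaFibR (r + 1) x - vietaFibR r x
    exact (continuous_id.mul ih2).sub ih1

lemma vf_neg (r : ℕ) (x : ℝ) : vietaFibR r (-x) = (-1) ^ r * vietaFibR r x := by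
  induction r using Nat.twoStepInduction with
  | zero => simp [vietaFibR]
  | one => simp [vietaFibR]
  | more r ih1 ih2 =>
    show -x * vietaFibR (r+1) (-x) - vietaFibR r (-x)
        = (-1) ^ (r+2) * (x * vietaFibR (r+1) x - vietaFibR r x)
    rw [ih1, ih2]; ring

lemma vf_sq (r : ℕ) (x : ℝ) :
    x ^ 2 * vietaFibR (r + 2) x
      = vietaFibR (r + 4) x + 2 * vietaFibR (r + 2) x + vietaFibR r x := by
  show _ = vietaFibR (r+2+2) x + _ + _
  rw [show vietaFibR (r+2+2) x = x * vietaFibR (r+3) x - vietaFibR (r+2) x from rfl,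
      show vietaFibR (r+3) x = x * vietaFibR (r+2) x - vietaFibR (r+1) x from rfl,
      show vietaFibR (r+2) x = x * vietaFibR (r+1) x - vietaFibR r x from rfl]
  ring

lemma vf_sq0 (x : ℝ) : x ^ 2 * vietaFibR 0 x = vietaFibR 2 x + vietaFibR 0 x := by
  simp [vietaFibR]; ring

lemma vf_sq1 (x : ℝ) : x ^ 2 * vietaFibR 1 x = vietaFibR 3 x + 2 * vietaFibR 1 x := by
  show _ = x * vietaFibR 2 x - vietaFibR 1 x + _
  simp [vietaFibR]; ring

noncomputable def kestenMcKay (q : ℝ) : Measure ℝ :=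
  volume.withDensity fun x =>
    ENNReal.ofReal (if x ∈ Set.Icc (-2 : ℝ) 2 then
      (1 / (2 * π)) * ((q + 1) * Real.sqrt (4 - x ^ 2)) /
        (((Real.sqrt q)⁻¹ + Real.sqrt q) ^ 2 - x ^ 2) else 0)

noncomputable def kmDens (q : ℝ) (x : ℝ) : ℝ :=
  if x ∈ Set.Icc (-2 : ℝ) 2 then
    (1 / (2 * π)) * ((q + 1) * Real.sqrt (4 - x ^ 2)) /
      (((Real.sqrt q)⁻¹ + Real.sqrt q) ^ 2 - x ^ 2) else 0

section km
variable {q : ℝ}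

lemma km_eq : kestenMcKay q = volume.withDensity fun x => ENNReal.ofReal (kmDens q x) := rfl

lemma sqrt_q_gt (hq : 1 < q) : 1 < Real.sqrt q := by
  have := Real.sqrt_lt_sqrt (by norm_num) hq
  simpa using this

lemma a_gt_two (hq : 1 < q) : 2 < (Real.sqrt q)⁻¹ + Real.sqrt q := by
  have h := sqrt_q_gt hq
  have h0 : 0 < Real.sqrt q := by linarith
  rw [show (Real.sqrt q)⁻¹ + Real.sqrt q = (1 + Real.sqrt q * Real.sqrt q)/Real.sqrt q by
    field_simp]
  rw [lt_div_iff₀ h0]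
  nlinarith

lemma den_pos (hq : 1 < q) {x : ℝ} (hx : x ∈ Set.Icc (-2:ℝ) 2) :
    0 < ((Real.sqrt q)⁻¹ + Real.sqrt q) ^ 2 - x ^ 2 := by
  have := a_gt_two hq
  obtain ⟨h1, h2⟩ := hx
  nlinarith

lemma dens_nonneg (hq : 1 < q) (x : ℝ) : 0 ≤ kmDens q x := by
  unfold kmDens
  split
  · next h =>
    apply div_nonneg
    · have : 0 ≤ Real.sqrt (4 - x^2) := Real.sqrt_nonneg _
      have : (0:ℝ) < π := Real.pi_pos
      positivity
    · exact (den_pos hq h).le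
  · exact le_refl 0

lemma dens_meas (q : ℝ) : Measurable (kmDens q) := by
  unfold kmDens
  apply Measurable.ite measurableSet_Icc _ measurable_const
  apply Measurable.div
  · fun_prop
  · fun_prop

lemma dens_zero_of_not_mem {q : ℝ} {x : ℝ} (hx : x ∉ Set.Icc (-2:ℝ) 2) : kmDens q x = 0 := by
  unfold kmDens; rw [if_neg hx]

lemma dens_even {q : ℝ} (x : ℝ) : kmDens q (-x) = kmDens q x := by
  unfold kmDens
  have : (-x) ∈ Set.Icc (-2:ℝ) 2 ↔ x ∈ Set.Icc (-2:ℝ) 2 := by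
    simp [Set.mem_Icc]; constructor <;> intro h <;> constructor <;> linarith [h.1, h.2]
  rw [neg_pow, if_congr this rfl rfl]
  ring_nf

lemma dens_contOn (hq : 1 < q) : ContinuousOn (kmDens q) (Set.Icc (-2:ℝ) 2) := by
  apply ContinuousOn.congr (f := fun x => (1 / (2 * π)) * ((q + 1) * Real.sqrt (4 - x ^ 2)) /
      (((Real.sqrt q)⁻¹ + Real.sqrt q) ^ 2 - x ^ 2))
  · apply ContinuousOn.div
    · fun_prop
    · fun_prop
    · intro x hx; exact (den_pos hq hx).ne'
  · intro x hx; unfold kmDens; rw [if_pos hx]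

lemma integral_km (hq : 1 < q) (f : ℝ → ℝ) :
    ∫ x, f x ∂kestenMcKay q = ∫ x, kmDens q x * f x := by
  have h1 : (kestenMcKay q) = volume.withDensity fun x => ((kmDens q x).toNNReal : ℝ≥0∞) := by
    rw [km_eq]; rfl
  rw [h1, integral_withDensity_eq_integral_smul (by
    exact (dens_meas q).real_toNNReal) f]
  congr 1
  ext x
  rw [NNReal.smul_def, smul_eq_mul, Real.coe_toNNReal _ (dens_nonneg hq x)]

lemma integrable_dens_mul (hq : 1 < q) {f : ℝ → ℝ} (hf : Continuous f) :
    Integrable (fun x => kmDens q x * f x) := by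
  have heq : (fun x => kmDens q x * f x)
      = Set.indicator (Set.Icc (-2:ℝ) 2) (fun x => kmDens q x * f x) := by
    funext x
    by_cases hx : x ∈ Set.Icc (-2:ℝ) 2
    · rw [Set.indicator_of_mem hx]
    · rw [Set.indicator_of_notMem hx, dens_zero_of_not_mem hx, zero_mul]
  rw [heq, integrable_indicator_iff measurableSet_Icc]
  exact ((dens_contOn hq).mul hf.continuousOn).integrableOn_compact isCompact_Icc

end km

lemma integral_cos_nat (k : ℕ) :
    ∫ θ in (0:ℝ)..π, Real.cos (k * θ) = if k = 0 then π else 0 := by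
  rcases Nat.eq_zero_or_pos k with hk | hk
  · subst hk; simp
  · rw [if_neg hk.ne']
    have hk' : (k : ℝ) ≠ 0 := Nat.cast_ne_zero.2 hk.ne'
    rw [intervalIntegral.integral_comp_mul_left Real.cos hk']
    simp [Real.sin_nat_mul_pi]

lemma orth (r : ℕ) :
    ∫ x in (-2:ℝ)..2, vietaFibR r x * Real.sqrt (4 - x ^ 2)
      = if r = 0 then 2 * π else 0 := by
  set g : ℝ → ℝ := fun x => vietaFibR r x * Real.sqrt (4 - x ^ 2) with hg
  have hgc : Continuous g := (vf_cont r).mul (Real.continuous_sqrt.comp (by fun_prop))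
  have hderiv : ∀ θ ∈ Set.uIcc (π:ℝ) 0, HasDerivAt (fun θ : ℝ => 2 * Real.cos θ)
      (-(2 * Real.sin θ)) θ := by
    intro θ _
    simpa [mul_comm] using ((Real.hasDerivAt_cos θ).const_mul (2:ℝ))
  have hsub := intervalIntegral.integral_comp_smul_deriv hderiv
    (by fun_prop) hgc
  simp only [Real.cos_pi, Real.cos_zero, mul_one] at hsub
  rw [show (2:ℝ) * (-1) = -2 by norm_num] at hsub
  rw [← hsub]
  rw [intervalIntegral.integral_symm]
  have hcongr : Set.EqOn (fun θ => -(2 * Real.sin θ) • g (2 * Real.cos θ))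
      (fun θ => -(2 * Real.cos (r * θ) - 2 * Real.cos ((r + 2) * θ))) (Set.uIcc 0 π) := by
    intro θ hθ
    rw [Set.uIcc_of_le Real.pi_nonneg] at hθ
    have hs : 0 ≤ Real.sin θ := Real.sin_nonneg_of_nonneg_of_le_pi hθ.1 hθ.2
    have hsqrt : Real.sqrt (4 - (2 * Real.cos θ) ^ 2) = 2 * Real.sin θ := by
      rw [show 4 - (2 * Real.cos θ) ^ 2 = (2 * Real.sin θ)^2 by
        nlinarith [Real.sin_sq_add_cos_sq θ], Real.sqrt_sq (by linarith)]
    simp only [smul_eq_mul, hg]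
    rw [hsqrt]
    have hvf := vf_cos r θ
    have e1 : Real.cos ((r:ℝ) * θ) = Real.cos (((r:ℝ)+1) * θ - θ) := by ring_nf
    have e2 : Real.cos (((r:ℝ)+2) * θ) = Real.cos (((r:ℝ)+1) * θ + θ) := by ring_nf
    push_cast
    rw [e1, e2, Real.cos_sub, Real.cos_add]
    nlinarith [hvf]
  simp only [Function.comp]
  rw [intervalIntegral.integral_congr hcongr]
  rw [intervalIntegral.integral_neg, neg_neg]
  rw [intervalIntegral.integral_sub ((by fun_prop : Continuous fun x:ℝ => 2 * Real.cos ((r:ℝ) * x)).intervalIntegrable _ _) ((by fun_prop : Continuous fun x:ℝ => 2 * Real.cos (((r:ℝ) + 2) * x)).intervalIntegrable _ _)]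
  have h1 : ∫ θ in (0:ℝ)..π, 2 * Real.cos (r * θ)
      = 2 * ∫ θ in (0:ℝ)..π, Real.cos (r * θ) := by
    rw [intervalIntegral.integral_const_mul]
  have h2 : ∫ θ in (0:ℝ)..π, 2 * Real.cos ((r + 2) * θ)
      = 2 * ∫ θ in (0:ℝ)..π, Real.cos (((r + 2 : ℕ)) * θ) := by
    rw [intervalIntegral.integral_const_mul]
    push_cast
    ring_nf
  rw [h1, h2, integral_cos_nat, integral_cos_nat]
  rcases Nat.eq_zero_or_pos r with h | h
  · subst h; simp
  · rw [if_neg h.ne', if_neg (by omega), if_neg h.ne']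
    ring

noncomputable def kmI (q : ℝ) (r : ℕ) : ℝ := ∫ x, kmDens q x * vietaFibR r x

section km2
variable {q : ℝ}

lemma J_eq (hq : 1 < q) (r : ℕ) :
    ∫ x, kmDens q x * ((((Real.sqrt q)⁻¹ + Real.sqrt q) ^ 2 - x ^ 2) * vietaFibR r x)
      = (q + 1) * (if r = 0 then 1 else 0) := by
  have hpi : (0:ℝ) < π := Real.pi_pos
  have hpt : ∀ x, kmDens q x * ((((Real.sqrt q)⁻¹ + Real.sqrt q) ^ 2 - x ^ 2) * vietaFibR r x)
      = Set.indicator (Set.Icc (-2:ℝ) 2)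
          (fun x => (1 / (2 * π)) * ((q + 1) * Real.sqrt (4 - x ^ 2)) * vietaFibR r x) x := by
    intro x
    by_cases hx : x ∈ Set.Icc (-2:ℝ) 2
    · rw [Set.indicator_of_mem hx]
      unfold kmDens
      rw [if_pos hx]
      have hD := den_pos hq hx
      set D := ((Real.sqrt q)⁻¹ + Real.sqrt q) ^ 2 - x ^ 2 with hDdef
      field_simp
    · rw [Set.indicator_of_notMem hx, dens_zero_of_not_mem hx, zero_mul]
  rw [show (fun x => kmDens q x * ((((Real.sqrt q)⁻¹ + Real.sqrt q) ^ 2 - x ^ 2) *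
        vietaFibR r x)) = _ from funext hpt]
  rw [integral_indicator measurableSet_Icc, MeasureTheory.integral_Icc_eq_integral_Ioc,
    ← intervalIntegral.integral_of_le (by norm_num : (-2:ℝ) ≤ 2)]
  have : ∀ x : ℝ, (1 / (2 * π)) * ((q + 1) * Real.sqrt (4 - x ^ 2)) * vietaFibR r x
      = ((q+1) / (2*π)) * (vietaFibR r x * Real.sqrt (4 - x ^ 2)) := by intro x; ring
  simp only [this]
  rw [intervalIntegral.integral_const_mul, orth r]
  rcases Nat.eq_zero_or_pos r with h | h
  · subst h; rw [if_pos rfl, if_pos rfl]; field_simp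
  · rw [if_neg h.ne', if_neg h.ne']; ring

lemma km_sq_int (hq : 1 < q) (r : ℕ) :
    ∫ x, kmDens q x * ((((Real.sqrt q)⁻¹ + Real.sqrt q) ^ 2 - x ^ 2) * vietaFibR r x)
      = (q⁻¹ + 2 + q) * kmI q r - ∫ x, kmDens q x * (x ^ 2 * vietaFibR r x) := by
  have ha : ((Real.sqrt q)⁻¹ + Real.sqrt q) ^ 2 = q⁻¹ + 2 + q := by
    have h0 : (0:ℝ) < q := by linarith
    have hs : Real.sqrt q ≠ 0 := by positivity
    rw [add_sq, inv_pow, Real.sq_sqrt h0.le, mul_assoc, inv_mul_cancel₀ hs, mul_one]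
  have hpt : ∀ x : ℝ, kmDens q x * ((((Real.sqrt q)⁻¹ + Real.sqrt q) ^ 2 - x ^ 2) * vietaFibR r x)
      = (q⁻¹ + 2 + q) * (kmDens q x * vietaFibR r x) - kmDens q x * (x ^ 2 * vietaFibR r x) := by
    intro x; rw [ha]; ring
  simp only [hpt]
  rw [integral_sub (((integrable_dens_mul hq (vf_cont r)).const_mul _))
    (integrable_dens_mul hq (f := fun x => x ^ 2 * vietaFibR r x) ((continuous_pow 2).mul (vf_cont r))),
    integral_const_mul]
  rfl

lemma km_split (hq : 1 < q) (r : ℕ) :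
    ∫ x, kmDens q x * (x ^ 2 * vietaFibR (r + 2) x)
      = kmI q (r + 4) + 2 * kmI q (r + 2) + kmI q r := by
  have hpt : ∀ x : ℝ, kmDens q x * (x ^ 2 * vietaFibR (r + 2) x)
      = kmDens q x * vietaFibR (r + 4) x + 2 * (kmDens q x * vietaFibR (r + 2) x)
        + kmDens q x * vietaFibR r x := by
    intro x; rw [vf_sq]; ring
  simp only [hpt]
  rw [integral_add (f := fun x => kmDens q x * vietaFibR (r+4) x
        + 2 * (kmDens q x * vietaFibR (r+2) x)) (g := fun x => kmDens q x * vietaFibR r x)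
      (Integrable.add (integrable_dens_mul hq (vf_cont _))
        ((integrable_dens_mul hq (vf_cont _)).const_mul _))
      (integrable_dens_mul hq (vf_cont _)),
    integral_add (f := fun x => kmDens q x * vietaFibR (r+4) x)
      (g := fun x => 2 * (kmDens q x * vietaFibR (r+2) x))
      (integrable_dens_mul hq (vf_cont _))
      ((integrable_dens_mul hq (vf_cont _)).const_mul _),
    integral_const_mul]
  rfl

lemma km_split0 (hq : 1 < q) :
    ∫ x, kmDens q x * (x ^ 2 * vietaFibR 0 x) = kmI q 2 + kmI q 0 := by
  have hpt : ∀ x : ℝ, kmDens q x * (x ^ 2 * vietaFibR 0 x)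
      = kmDens q x * vietaFibR 2 x + kmDens q x * vietaFibR 0 x := by
    intro x; rw [vf_sq0]; ring
  simp only [hpt]
  rw [integral_add (f := fun x => kmDens q x * vietaFibR 2 x)
    (g := fun x => kmDens q x * vietaFibR 0 x)
    (integrable_dens_mul hq (vf_cont _)) (integrable_dens_mul hq (vf_cont _))]
  rfl

lemma km_split1 (hq : 1 < q) :
    ∫ x, kmDens q x * (x ^ 2 * vietaFibR 1 x) = kmI q 3 + 2 * kmI q 1 := by
  have hpt : ∀ x : ℝ, kmDens q x * (x ^ 2 * vietaFibR 1 x)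
      = kmDens q x * vietaFibR 3 x + 2 * (kmDens q x * vietaFibR 1 x) := by
    intro x; rw [vf_sq1]; ring
  simp only [hpt]
  rw [integral_add (f := fun x => kmDens q x * vietaFibR 3 x)
      (g := fun x => 2 * (kmDens q x * vietaFibR 1 x))
      (integrable_dens_mul hq (vf_cont _))
      ((integrable_dens_mul hq (vf_cont _)).const_mul _), integral_const_mul]
  rfl

lemma km_rec (hq : 1 < q) (r : ℕ) :
    kmI q (r + 4) = (q⁻¹ + q) * kmI q (r + 2) - kmI q r := by
  have h1 := J_eq hq (r + 2)
  rw [if_neg (by omega), mul_zero, km_sq_int hq (r + 2), km_split hq r] at h1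
  linear_combination -h1

lemma km_I2 (hq : 1 < q) : kmI q 2 = (q⁻¹ + 1 + q) * kmI q 0 - (q + 1) := by
  have h1 := J_eq hq 0
  rw [if_pos rfl, mul_one, km_sq_int hq 0, km_split0 hq] at h1
  linear_combination -h1

lemma km_I3 (hq : 1 < q) : kmI q 3 = (q⁻¹ + q) * kmI q 1 := by
  have h1 := J_eq hq 1
  rw [if_neg (by omega), mul_zero, km_sq_int hq 1, km_split1 hq] at h1
  linear_combination -h1

lemma km_I1 (hq : 1 < q) : kmI q 1 = 0 := by
  have hodd : ∀ x : ℝ, kmDens q (-x) * vietaFibR 1 (-x) = -(kmDens q x * vietaFibR 1 x) := by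
    intro x
    rw [dens_even, show vietaFibR 1 (-x) = -x from rfl, show vietaFibR 1 x = x from rfl]
    ring
  have h := integral_neg_eq_self (fun x => kmDens q x * vietaFibR 1 x) volume
  simp only [hodd] at h
  rw [integral_neg] at h
  unfold kmI
  linarith

end km2

section km3
variable {q : ℝ}

lemma km_bound (hq : 1 < q) (r : ℕ) : |kmI q r| ≤ (r + 1) * kmI q 0 := by
  have h0 : kmI q 0 = ∫ x, kmDens q x * vietaFibR 0 x := rfl
  have hint : Integrable (fun x => (r + 1 : ℝ) * (kmDens q x * vietaFibR 0 x)) :=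
    (integrable_dens_mul hq (vf_cont 0)).const_mul _
  have hpt : ∀ x : ℝ, ‖kmDens q x * vietaFibR r x‖
      ≤ (r + 1 : ℝ) * (kmDens q x * vietaFibR 0 x) := by
    intro x
    rw [show vietaFibR 0 x = 1 from rfl, mul_one, Real.norm_eq_abs, abs_mul,
      abs_of_nonneg (dens_nonneg hq x)]
    by_cases hx : x ∈ Set.Ioo (-2:ℝ) 2
    · have := vf_bound r hx
      have := dens_nonneg hq (x := x)
      nlinarith [abs_nonneg (vietaFibR r x)]
    · have hz : kmDens q x = 0 := by
        by_cases hx2 : x ∈ Set.Icc (-2:ℝ) 2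
        · have : x = -2 ∨ x = 2 := by
            obtain ⟨a1, a2⟩ := hx2
            simp only [Set.mem_Ioo, not_and_or, not_lt] at hx
            rcases hx with h | h
            · left; linarith
            · right; linarith
          unfold kmDens
          rw [if_pos hx2]
          have h4 : 4 - x ^ 2 = 0 := by rcases this with h | h <;> rw [h] <;> ring
          rw [h4, Real.sqrt_zero, mul_zero, mul_zero, zero_div]
        · exact dens_zero_of_not_mem hx2
      rw [hz]
      simp
  calc |kmI q r| = ‖∫ x, kmDens q x * vietaFibR r x‖ := rfl
    _ ≤ ∫ x, (r + 1 : ℝ) * (kmDens q x * vietaFibR 0 x) :=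
        norm_integral_le_of_norm_le hint (Filter.Eventually.of_forall hpt)
    _ = (r + 1) * kmI q 0 := integral_const_mul _ _

lemma km_even (hq : 1 < q) (k : ℕ) : kmI q (2 * k) = (q⁻¹) ^ k * kmI q 0 ∧ kmI q 0 = 1 := by
  have hq0 : (0:ℝ) < q := by linarith
  have hiq : q⁻¹ < 1 := by rw [inv_lt_one_iff₀]; right; exact hq
  have hiq0 : (0:ℝ) < q⁻¹ := by positivity
  have hd : q - q⁻¹ ≠ 0 := by
    have : q⁻¹ < q := by linarith
    intro h; nlinarith
  set v : ℕ → ℝ := fun k => kmI q (2 * k) with hv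
  have hrec : ∀ k, v (k + 2) = (q⁻¹ + q) * v (k + 1) - v k := by
    intro k
    have := km_rec hq (2 * k)
    rw [hv]
    simp only []
    rw [show 2*(k+2) = 2*k+4 from by omega, show 2*(k+1) = 2*k+2 from by omega]
    exact this
  obtain ⟨B, hBmul⟩ : ∃ B : ℝ, B * (q - q⁻¹) = v 1 - v 0 * q⁻¹ :=
    ⟨_, div_mul_cancel₀ _ hd⟩
  obtain ⟨A, hA⟩ : ∃ A : ℝ, A = v 0 - B := ⟨_, rfl⟩
  have hAB : ∀ k, v k = A * (q⁻¹) ^ k + B * q ^ k := by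
    intro k
    induction k using Nat.twoStepInduction with
    | zero => simp [hA]
    | one =>
      simp only [pow_one]
      rw [hA]
      linear_combination -hBmul
    | more k ih1 ih2 =>
      rw [hrec k, ih1, ih2]
      have hqq : q * q⁻¹ = 1 := mul_inv_cancel₀ hq0.ne'
      linear_combination (A * q⁻¹ ^ k + B * q ^ k) * hqq
  have hBq : ∀ k : ℕ, |B| ≤ 2 * kmI q 0 * ((k:ℝ) * (q⁻¹)^k) + (kmI q 0 + |A|) * (q⁻¹)^k := by
    intro k
    have h1 : |v k| ≤ (2 * k + 1) * kmI q 0 := by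
      have := km_bound hq (2 * k)
      calc |v k| = |kmI q (2*k)| := rfl
        _ ≤ ((2*k : ℕ) + 1) * kmI q 0 := this
        _ = (2 * k + 1) * kmI q 0 := by push_cast; ring
    have h2 : |B| * q ^ k ≤ |v k| + |A| * (q⁻¹)^k := by
      have : B * q ^ k = v k - A * (q⁻¹)^k := by rw [hAB k]; ring
      calc |B| * q^k = |B * q^k| := by
            rw [abs_mul, abs_of_pos (by positivity : (0:ℝ) < q^k)]
        _ = |v k - A * (q⁻¹)^k| := by rw [this]
        _ ≤ |v k| + |A * (q⁻¹)^k| := abs_sub _ _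
        _ = |v k| + |A| * (q⁻¹)^k := by
            rw [abs_mul, abs_of_pos (by positivity : (0:ℝ) < (q⁻¹)^k)]
    have h3 : |B| = |B| * q^k * (q⁻¹)^k := by
      rw [mul_assoc, ← mul_pow, mul_inv_cancel₀ hq0.ne', one_pow, mul_one]
    have hik : (0:ℝ) < (q⁻¹)^k := by positivity
    calc |B| = |B| * q^k * (q⁻¹)^k := h3
      _ ≤ (|v k| + |A| * (q⁻¹)^k) * (q⁻¹)^k := by gcongr
      _ ≤ ((2*k+1) * kmI q 0 + |A| * (q⁻¹)^k) * (q⁻¹)^k := by gcongr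
      _ ≤ ((2*k+1) * kmI q 0 + |A| * 1) * (q⁻¹)^k := by
          apply mul_le_mul_of_nonneg_right _ hik.le
          exact add_le_add_right
            (mul_le_mul_of_nonneg_left (pow_le_one₀ hiq0.le hiq.le) (abs_nonneg A)) _
      _ = 2 * kmI q 0 * ((k:ℝ) * (q⁻¹)^k) + (kmI q 0 + |A|) * (q⁻¹)^k := by ring
  have hlim : Filter.Tendsto
      (fun k : ℕ => 2 * kmI q 0 * ((k:ℝ) * (q⁻¹)^k) + (kmI q 0 + |A|) * (q⁻¹)^k)
      Filter.atTop (nhds 0) := by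
    have h1 : Filter.Tendsto (fun k : ℕ => (k:ℝ) * (q⁻¹)^k) Filter.atTop (nhds 0) := by
      have hs := summable_pow_mul_geometric_of_norm_lt_one (R := ℝ) 1 (r := q⁻¹)
        (by rw [Real.norm_eq_abs, abs_of_pos hiq0]; exact hiq)
      have := hs.tendsto_atTop_zero
      simpa [pow_one] using this
    have h2 : Filter.Tendsto (fun k : ℕ => (q⁻¹)^k) Filter.atTop (nhds 0) :=
      tendsto_pow_atTop_nhds_zero_of_lt_one hiq0.le hiq
    have := (h1.const_mul (2 * kmI q 0)).add (h2.const_mul (kmI q 0 + |A|))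
    simpa [mul_comm] using this
  have hBabs : |B| ≤ 0 := ge_of_tendsto' hlim hBq
  have hB0 : B = 0 := abs_nonpos_iff.mp hBabs
  have hA0 : A = v 0 := by rw [hA, hB0, sub_zero]
  have hv1 : v 1 = v 0 * q⁻¹ := by
    have h := hAB 1
    rw [hB0, hA0] at h
    simpa [pow_one] using h
  have hI2 : v 1 = (q⁻¹ + 1 + q) * v 0 - (q + 1) := by
    have := km_I2 hq
    show kmI q (2*1) = (q⁻¹ + 1 + q) * kmI q (2*0) - (q + 1)
    norm_num
    exact this
  have hsum : (1 + q) * v 0 = q + 1 := by linear_combination hv1 - hI2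
  have h1q : (1:ℝ) + q ≠ 0 := by linarith
  have hv0 : v 0 = 1 := by
    have : (1 + q) * v 0 = (1 + q) * 1 := by rw [hsum]; ring
    exact mul_left_cancel₀ h1q this
  constructor
  · have := hAB k
    rw [hB0, hA0, hv0] at this
    show v k = (q⁻¹)^k * kmI q 0
    rw [this]
    show 1 * q⁻¹^k + 0 * q^k = q⁻¹^k * v 0
    rw [hv0]; ring
  · show v 0 = 1
    exact hv0

lemma km_odd (hq : 1 < q) (k : ℕ) : kmI q (2 * k + 1) = 0 := by
  induction k using Nat.twoStepInduction with
  | zero => exact km_I1 hq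
  | one =>
    show kmI q 3 = 0
    rw [km_I3 hq, km_I1 hq, mul_zero]
  | more k ih1 ih2 =>
    have h := km_rec hq (2 * k + 1)
    rw [show 2*k+1+4 = 2*(k+2)+1 from by omega, show 2*k+1+2 = 2*(k+1)+1 from by omega] at h
    rw [h, ih2, ih1, mul_zero, sub_zero]

end km3

theorem integral_vietaFib_kestenMcKay (q : ℝ) (hq : 1 < q) (r : ℕ) :
    ∫ x, vietaFibR r x ∂kestenMcKay q = if Even r then ((Real.sqrt q)⁻¹) ^ r else 0 := by
  rw [integral_km hq (vietaFibR r)]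
  have hIr : (∫ x, kmDens q x * vietaFibR r x) = kmI q r := rfl
  rw [hIr]
  have hs2 : ((Real.sqrt q)⁻¹) ^ 2 = q⁻¹ := by
    rw [inv_pow, Real.sq_sqrt (by linarith : (0:ℝ) ≤ q)]
  rcases Nat.even_or_odd r with he | ho
  · obtain ⟨k, hk⟩ := he
    rw [if_pos ⟨k, hk⟩]
    subst hk
    have h := (km_even hq k).1
    rw [(km_even hq k).2, mul_one] at h
    rw [show k + k = 2 * k from by omega] at *
    rw [h, pow_mul, hs2]
  · rw [if_neg (Nat.not_even_iff_odd.mpr ho)]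
    obtain ⟨k, hk⟩ := ho
    subst hk
    exact km_odd hq k
end

section
/- Let q > 1 real, define X_{r,q} = X_r - q^{-1} X_{r-2} (with X_s = 0 for negative s), and let \mu_q be the Kesten-McKay distribution with density (1/(2\pi))(q+1)\sqrt{4-x^2}/((q^{-1/2}+q^{1/2})^2-x^2) on [-2,2]. Then \int X_{n,q} X_{m,q} d\mu_q = 0 if m \ne n, equals 1 if m = n = 0, and equals 1 + q^{-1} if m = n \ge 1. -/
open MeasureTheory Set Filter
open scoped Real Topology NNReal
set_option maxHeartbeats 1000000
/-- The modified Chebyshev polynomials `X_{r,q} = X_r - q⁻¹ X_{r-2}`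
(with the convention `X_s = 0` for negative `s`). -/
noncomputable def vietaFibRq (q : ℝ) (r : ℕ) (x : ℝ) : ℝ :=
  vietaFibR r x - if 2 ≤ r then q⁻¹ * vietaFibR (r - 2) x else 0

namespace VF

@[simp] lemma vf0 (x : ℝ) : vietaFibR 0 x = 1 := rfl
@[simp] lemma vf1 (x : ℝ) : vietaFibR 1 x = x := rfl
lemma vf2 (r : ℕ) (x : ℝ) : vietaFibR (r+2) x = x * vietaFibR (r+1) x - vietaFibR r x := rfl

lemma contVF (r : ℕ) : Continuous (vietaFibR r) := by
  induction r using Nat.twoStepInduction with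
  | zero => exact continuous_const
  | one => exact continuous_id
  | more r h1 h2 =>
    have e : vietaFibR (r+2) = fun x => x * vietaFibR (r+1) x - vietaFibR r x := rfl
    rw [e]
    exact (continuous_id.mul h2).sub h1

lemma mulX (r : ℕ) (x : ℝ) : x * vietaFibR (r+1) x = vietaFibR (r+2) x + vietaFibR r x := by
  rw [vf2]; ring

/-- derivative function -/
noncomputable def vf' : ℕ → ℝ → ℝ
  | 0, _ => 0
  | 1, _ => 1
  | (r + 2), x => vietaFibR (r+1) x + x * vf' (r + 1) x - vf' r x

lemma hasDeriv (r : ℕ) (x : ℝ) : HasDerivAt (vietaFibR r) (vf' r x) x := by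
  induction r using Nat.twoStepInduction generalizing x with
  | zero => exact hasDerivAt_const x (1:ℝ)
  | one => exact hasDerivAt_id x
  | more r h1 h2 =>
    have : HasDerivAt (fun y => y * vietaFibR (r+1) y - vietaFibR r y)
        (1 * vietaFibR (r+1) x + x * vf' (r+1) x - vf' r x) x :=
      (((hasDerivAt_id x).mul (h2 x)).sub (h1 x))
    rw [show vietaFibR (r+2) = fun y => y * vietaFibR (r+1) y - vietaFibR r y from rfl,
      show vf' (r+2) x = 1 * vietaFibR (r+1) x + x * vf' (r+1) x - vf' r x by rw [one_mul]; rfl]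
    exact this

/-- identity (D): (4-x²) X'_{r+1} = (r+3) X_r - (r+1) X_{r+2} -/
lemma derivId (r : ℕ) (x : ℝ) :
    (4 - x^2) * vf' (r+1) x = ((r:ℝ)+3) * vietaFibR r x - ((r:ℝ)+1) * vietaFibR (r+2) x := by
  induction r using Nat.twoStepInduction generalizing x with
  | zero => simp [vf', vf2]; ring
  | one => simp [vf', vf2]; push_cast; ring
  | more r h1 h2 =>
    have e2 := h2 x
    have e1 := h1 x
    have m0 := mulX r x
    have m1 := mulX (r+1) x
    have m2 := mulX (r+2) x
    have m3 := mulX (r+3) x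
    simp only [vf'] at *
    have hd : vf' (r+3) x = vietaFibR (r+2) x + x * vf' (r+2) x - vf' (r+1) x := rfl
    push_cast at *
    linear_combination x * e2 - e1 - x * m1 + ((r:ℝ)+3) * m0 - ((r:ℝ)+3) * m2


lemma parity (r : ℕ) (x : ℝ) : vietaFibR r (-x) = (-1)^r * vietaFibR r x := by
  induction r using Nat.twoStepInduction generalizing x with
  | zero => simp
  | one => simp
  | more r h1 h2 =>
    simp only [vf2, h1, h2]
    ring

lemma prodForm (b a : ℕ) (hba : b ≤ a) (x : ℝ) :
    vietaFibR a x * vietaFibR b x = ∑ k ∈ Finset.range (b+1), vietaFibR (a - b + 2*k) x := by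
  induction b using Nat.twoStepInduction generalizing a with
  | zero => simp
  | one =>
    obtain ⟨a', rfl⟩ : ∃ a', a = a' + 1 := ⟨a - 1, by omega⟩
    rw [Finset.sum_range_succ, Finset.sum_range_one]
    have := mulX a' x
    have e1 : a' + 1 - 1 + 2 * 0 = a' := by omega
    have e2 : a' + 1 - 1 + 2 * 1 = a' + 2 := by omega
    rw [e1, e2]
    simp only [vf1]
    linarith [mulX a' x]
  | more b h1 h2 =>
    rw [vf2, mul_sub, mul_left_comm, h2 a (by omega),
      h1 a (by omega), Finset.mul_sum]
    have key : ∀ k ∈ Finset.range (b+2), x * vietaFibR (a - (b+1) + 2*k) x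
        = vietaFibR (a - (b+2) + 2*(k+1)) x + vietaFibR (a - (b+2) + 2*k) x := by
      intro k _
      have e1 : a - (b+1) + 2*k = (a - (b+2) + 2*k) + 1 := by omega
      have e2 : a - (b+2) + 2*(k+1) = (a - (b+2) + 2*k) + 2 := by omega
      rw [e1, e2]
      exact mulX _ x
    rw [Finset.sum_congr rfl key, Finset.sum_add_distrib]
    have shift : ∑ k ∈ Finset.range (b+2), vietaFibR (a - (b+2) + 2*(k+1)) x
        = ∑ k ∈ Finset.range (b+3), vietaFibR (a - (b+2) + 2*k) x - vietaFibR (a - (b+2)) x := by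
      rw [Finset.sum_range_succ' (fun k => vietaFibR (a - (b+2) + 2*k) x) (b+2)]
      simp
    rw [shift]
    have cancel : ∑ k ∈ Finset.range (b+2), vietaFibR (a - (b+2) + 2*k) x
        = ∑ k ∈ Finset.range (b+1), vietaFibR (a - b + 2*k) x + vietaFibR (a - (b+2)) x := by
      rw [Finset.sum_range_succ' (fun k => vietaFibR (a - (b+2) + 2*k) x) (b+1)]
      simp only [mul_zero, add_zero]
      congr 1
      refine Finset.sum_congr rfl fun k _ => ?_
      congr 1
      omega
    rw [cancel]
    ring

end VF

namespace VF

lemma dagger (r : ℕ) (x : ℝ) :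
    (4 - x^2) * (vf' (r+2) x / ((r:ℝ)+3) - vf' r x / ((r:ℝ)+1))
      - x * (vietaFibR (r+2) x / ((r:ℝ)+3) - vietaFibR r x / ((r:ℝ)+1))
    = (4 - x^2) * vietaFibR (r+1) x := by
  match r with
  | 0 =>
    have h2 : vf' 2 x = vietaFibR 1 x + x * vf' 1 x - vf' 0 x := rfl
    simp only [h2, vf', vf0, vf1, vf2]
    norm_num
    ring
  | (s+1) =>
    have d1 := derivId s x
    have d2 := derivId (s+2) x
    have m0 := mulX s x
    have m1 := mulX (s+1) x
    have m2 := mulX (s+2) x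
    push_cast at *
    have h4 : (s:ℝ) + 1 + 3 = (s:ℝ) + 4 := by ring
    have hn4 : (s:ℝ) + 4 ≠ 0 := by positivity
    have hn2 : (s:ℝ) + 2 ≠ 0 := by positivity
    field_simp
    linear_combination ((s:ℝ)+2) * d2 - ((s:ℝ)+4) * d1
      + (((s:ℝ)+4)*((s:ℝ)+2) - ((s:ℝ)+2)) * m2 + (((s:ℝ)+4)*((s:ℝ)+2) + ((s:ℝ)+4)) * m0
      + ((s:ℝ)+4)*((s:ℝ)+2)*x * m1

lemma Npos (r : ℕ) : ∫ x in (-2:ℝ)..2, vietaFibR (r+1) x * Real.sqrt (4 - x^2) = 0 := by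
  set Rf : ℝ → ℝ := fun x => vietaFibR (r+2) x / ((r:ℝ)+3) - vietaFibR r x / ((r:ℝ)+1) with hRf
  set G : ℝ → ℝ := fun x => Real.sqrt (4 - x^2) * Rf x with hG
  have hcont : Continuous G := by
    exact (Real.continuous_sqrt.comp (by continuity)).mul
      (((contVF (r+2)).div_const _).sub ((contVF r).div_const _))
  have hG2 : G 2 = 0 := by
    have h : Real.sqrt (4 - (2:ℝ)^2) = 0 := by norm_num
    simp only [hG, h, zero_mul]
  have hGm2 : G (-2) = 0 := by
    have h : Real.sqrt (4 - (-2:ℝ)^2) = 0 := by norm_num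
    simp only [hG, h, zero_mul]
  have hderiv : ∀ x ∈ Ioo (-2:ℝ) 2, HasDerivAt G (vietaFibR (r+1) x * Real.sqrt (4 - x^2)) x := by
    intro x hx
    have hs : 0 < 4 - x^2 := by nlinarith [hx.1, hx.2]
    have hsqrt : (0:ℝ) < Real.sqrt (4 - x^2) := Real.sqrt_pos.2 hs
    have hinner : HasDerivAt (fun y : ℝ => 4 - y^2) (-(2*x)) x := by
      simpa using ((hasDerivAt_pow 2 x).const_sub 4)
    have h1 : HasDerivAt (fun y : ℝ => Real.sqrt (4 - y^2)) (-(2*x) / (2 * Real.sqrt (4 - x^2))) x :=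
      hinner.sqrt (ne_of_gt hs)
    have h2 : HasDerivAt Rf (vf' (r+2) x / ((r:ℝ)+3) - vf' r x / ((r:ℝ)+1)) x :=
      ((hasDeriv (r+2) x).div_const _).sub ((hasDeriv r x).div_const _)
    have h3 := h1.mul h2
    refine h3.congr_deriv ?_
    symm
    have hsq : Real.sqrt (4 - x^2) * Real.sqrt (4 - x^2) = 4 - x^2 :=
      Real.mul_self_sqrt hs.le
    have hd := dagger r x
    set s := Real.sqrt (4 - x^2) with hsdef
    have hd' : s*s * (vf' (r+2) x / ((r:ℝ)+3) - vf' r x / ((r:ℝ)+1))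
        - x * (vietaFibR (r+2) x / ((r:ℝ)+3) - vietaFibR r x / ((r:ℝ)+1))
        = s*s * vietaFibR (r+1) x := by rw [hsq]; exact hd
    simp only [hRf]
    have hsne : s ≠ 0 := ne_of_gt hsqrt
    have hr3 : ((r:ℝ)+3) ≠ 0 := by positivity
    have hr1 : ((r:ℝ)+1) ≠ 0 := by positivity
    have hsinv : s * s⁻¹ = 1 := mul_inv_cancel₀ hsne
    linear_combination (-s⁻¹) * hd' + (s * (vf' (r+2) x / ((r:ℝ)+3) - vf' r x / ((r:ℝ)+1))
      - s * vietaFibR (r+1) x) * hsinv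
  have hint : IntervalIntegrable (fun x => vietaFibR (r+1) x * Real.sqrt (4 - x^2))
      volume (-2) 2 :=
    (((contVF (r+1)).mul (Real.continuous_sqrt.comp (by continuity))).intervalIntegrable _ _)
  have := intervalIntegral.integral_eq_sub_of_hasDerivAt_of_tendsto (a := (-2:ℝ)) (b := 2)
    (by norm_num) hderiv hint
    ((hcont.tendsto _).mono_left nhdsWithin_le_nhds)
    ((hcont.tendsto _).mono_left nhdsWithin_le_nhds)
  rw [this, hG2, hGm2, sub_zero]

end VF

namespace VF

noncomputable def dens (q x : ℝ) : ℝ :=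
  (1 / (2 * π)) * ((q + 1) * Real.sqrt (4 - x ^ 2)) /
    (((Real.sqrt q)⁻¹ + Real.sqrt q) ^ 2 - x ^ 2)

noncomputable def cq (q : ℝ) : ℝ := (q - 1) / (q + 1)

noncomputable def Mom (q : ℝ) (r : ℕ) : ℝ := ∫ x in (-2:ℝ)..2, vietaFibR r x * dens q x

lemma N0 : ∫ x in (-2:ℝ)..2, Real.sqrt (4 - x^2) = 2*π := by
  have h : ∀ x : ℝ, Real.sqrt (4 - x^2) = 2 * Real.sqrt (1 - (x/2)^2) := by
    intro x
    rw [show (4 - x^2 : ℝ) = 4 * (1 - (x/2)^2) by ring, Real.sqrt_mul (by norm_num)]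
    rw [show (4:ℝ) = 2^2 by norm_num, Real.sqrt_sq (by norm_num)]
  simp_rw [h]
  rw [intervalIntegral.integral_const_mul]
  have := intervalIntegral.integral_comp_div (a := (-2:ℝ)) (b := 2) (c := 2)
    (f := fun u => Real.sqrt (1 - u^2)) (by norm_num)
  rw [this]
  norm_num [integral_sqrt_one_sub_sq]
  ring

section
variable {q : ℝ}

lemma hq0 (hq : 1 < q) : 0 < q := by linarith
lemma sqq_pos (hq : 1 < q) : 0 < Real.sqrt q := Real.sqrt_pos.2 (hq0 hq)
lemma sq_sqq (hq : 1 < q) : (Real.sqrt q) ^ 2 = q := Real.sq_sqrt (hq0 hq).le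

lemma Asq_eq (hq : 1 < q) : ((Real.sqrt q)⁻¹ + Real.sqrt q) ^ 2 = q + 2 + q⁻¹ := by
  have h1 : (Real.sqrt q) ^ 2 = q := sq_sqq hq
  have h2 : Real.sqrt q ≠ 0 := ne_of_gt (sqq_pos hq)
  rw [add_sq, inv_pow, h1]
  have h3 : (Real.sqrt q)⁻¹ * Real.sqrt q = 1 := inv_mul_cancel₀ h2
  rw [mul_assoc, h3]
  ring

lemma Asq_gt (hq : 1 < q) : 4 < ((Real.sqrt q)⁻¹ + Real.sqrt q) ^ 2 := by
  rw [Asq_eq hq]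
  have h : q * q⁻¹ = 1 := mul_inv_cancel₀ (ne_of_gt (hq0 hq))
  nlinarith [hq0 hq, sq_nonneg (q - 1)]

lemma denpos (hq : 1 < q) {x : ℝ} (hx : x ∈ Icc (-2:ℝ) 2) :
    0 < ((Real.sqrt q)⁻¹ + Real.sqrt q) ^ 2 - x ^ 2 := by
  have h4 : x ^ 2 ≤ 4 := by nlinarith [hx.1, hx.2]
  linarith [Asq_gt hq]

lemma dens_nonneg (hq : 1 < q) {x : ℝ} (hx : x ∈ Icc (-2:ℝ) 2) : 0 ≤ dens q x := by
  unfold dens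
  have h1 : 0 ≤ (1 / (2 * π)) := by positivity
  apply div_nonneg
  · positivity
  · exact (denpos hq hx).le

lemma dens_contOn (hq : 1 < q) : ContinuousOn (dens q) (Icc (-2:ℝ) 2) := by
  unfold dens
  apply ContinuousOn.div
  · exact (continuous_const.mul (continuous_const.mul
      (Real.continuous_sqrt.comp (by continuity)))).continuousOn
  · exact (continuous_const.sub (continuous_pow 2)).continuousOn
  · exact fun x hx => ne_of_gt (denpos hq hx)

lemma integ (hq : 1 < q) {f : ℝ → ℝ} (hf : Continuous f) :
    IntervalIntegrable (fun x => f x * dens q x) volume (-2) 2 := by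
  apply ContinuousOn.intervalIntegrable
  rw [uIcc_of_le (by norm_num : (-2:ℝ) ≤ 2)]
  exact hf.continuousOn.mul (dens_contOn hq)

end

end VF

namespace VF
variable {q : ℝ}

lemma cq_pos (hq : 1 < q) : 0 < cq q := by
  unfold cq; apply div_pos <;> linarith

lemma sqrt4sub_tendsto_top :
    Tendsto (fun x : ℝ => (Real.sqrt (4 - x^2))⁻¹) (𝓝[<] 2) atTop := by
  apply tendsto_inv_nhdsGT_zero.comp
  rw [tendsto_nhdsWithin_iff]
  constructor
  · have hc : Continuous (fun x : ℝ => Real.sqrt (4 - x^2)) :=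
      Real.continuous_sqrt.comp (by continuity)
    have := (hc.tendsto 2).mono_left (nhdsWithin_le_nhds (s := Iio (2:ℝ)))
    simpa [show Real.sqrt (4 - (2:ℝ)^2) = 0 by norm_num] using this
  · filter_upwards [Ioo_mem_nhdsLT_of_mem (show (2:ℝ) ∈ Ioc (-2) 2 by norm_num)] with x hx
    exact Real.sqrt_pos.2 (by nlinarith [hx.1, hx.2])

lemma sqrt4sub_tendsto_top' :
    Tendsto (fun x : ℝ => (Real.sqrt (4 - x^2))⁻¹) (𝓝[>] (-2)) atTop := by
  apply tendsto_inv_nhdsGT_zero.comp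
  rw [tendsto_nhdsWithin_iff]
  constructor
  · have hc : Continuous (fun x : ℝ => Real.sqrt (4 - x^2)) :=
      Real.continuous_sqrt.comp (by continuity)
    have := (hc.tendsto (-2)).mono_left (nhdsWithin_le_nhds (s := Ioi (-2:ℝ)))
    simpa only [show Real.sqrt (4 - (-2:ℝ)^2) = 0 from by norm_num] using this
  · filter_upwards [Ioo_mem_nhdsGT_of_mem (show (-2:ℝ) ∈ Ico (-2) 2 by norm_num)] with x hx
    exact Real.sqrt_pos.2 (by nlinarith [hx.1, hx.2])

lemma Mom_zero (hq : 1 < q) : Mom q 0 = 1 := by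
  have hπ : (0:ℝ) < π := Real.pi_pos
  set c := cq q with hc
  have hcpos : 0 < c := cq_pos hq
  set F : ℝ → ℝ := fun x =>
    ((q+1)/(2*π)) * (Real.arcsin (x/2) - c * Real.arctan (c * x / Real.sqrt (4 - x^2)))
    with hF
  have hderiv : ∀ x ∈ Ioo (-2:ℝ) 2, HasDerivAt F (vietaFibR 0 x * dens q x) x := by
    intro x hx
    have hs : 0 < 4 - x^2 := by nlinarith [hx.1, hx.2]
    set s := Real.sqrt (4 - x^2) with hsdef
    have hspos : 0 < s := Real.sqrt_pos.2 hs
    have hsne : s ≠ 0 := ne_of_gt hspos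
    have hsq : s^2 = 4 - x^2 := Real.sq_sqrt hs.le
    have h1 : x/2 ≠ -1 := by intro h; nlinarith [hx.1]
    have h2 : x/2 ≠ 1 := by intro h; nlinarith [hx.2]
    have harc : HasDerivAt (fun y : ℝ => Real.arcsin (y/2))
        (1 / Real.sqrt (1 - (x/2)^2) * (2⁻¹ * 1)) x := by
      exact ((Real.hasDerivAt_arcsin h1 h2).comp x
        ((hasDerivAt_id' x).div_const 2)).congr_deriv
        (by ring : 1 / Real.sqrt (1 - (x/2)^2) * (1/2) = 1 / Real.sqrt (1 - (x/2)^2) * (2⁻¹ * 1))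
    have hsub : Real.sqrt (1 - (x/2)^2) = s / 2 := by
      rw [show (1 - (x/2)^2 : ℝ) = (4 - x^2)/4 by ring, hsdef, Real.sqrt_div hs.le,
        show Real.sqrt (4:ℝ) = 2 by
          rw [show (4:ℝ) = 2^2 by norm_num]; exact Real.sqrt_sq (by norm_num)]
    have hinner : HasDerivAt (fun y : ℝ => 4 - y^2) (-(2*x)) x := by
      simpa using ((hasDerivAt_pow 2 x).const_sub 4)
    have hsder : HasDerivAt (fun y : ℝ => Real.sqrt (4 - y^2)) (-(2*x)/(2*s)) x :=
      hinner.sqrt (ne_of_gt hs)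
    have hlin : HasDerivAt (fun y : ℝ => c * y) c x := by
      simpa using (hasDerivAt_id x).const_mul c
    have huder : HasDerivAt (fun y : ℝ => c * y / Real.sqrt (4 - y^2))
        ((c * s - c * x * (-(2*x)/(2*s))) / s^2) x := hlin.div hsder hsne
    have hatan : HasDerivAt (fun y : ℝ => Real.arctan (c * y / Real.sqrt (4 - y^2)))
        (1/(1 + (c * x / s)^2) * ((c * s - c * x * (-(2*x)/(2*s))) / s^2)) x :=
      (Real.hasDerivAt_arctan _).comp x huder
    have htot := ((harc.sub (hatan.const_mul c)).const_mul ((q+1)/(2*π)))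
    refine htot.congr_deriv ?_
    symm
    rw [hsub]
    simp only [vf0, one_mul]
    unfold dens
    rw [Asq_eq hq]
    have hq1 : (0:ℝ) < q + 1 := by positivity
    have hqpos : (0:ℝ) < q := hq0 hq
    have hqne : q ≠ 0 := ne_of_gt hqpos
    have hq1ne : q + 1 ≠ 0 := ne_of_gt hq1
    have hDpos : 0 < (q+1)^2 - q * x^2 := by
      have := denpos hq (show x ∈ Icc (-2:ℝ) 2 from ⟨hx.1.le, hx.2.le⟩)
      rw [Asq_eq hq] at this
      have h := mul_pos hqpos this
      have hqq : q * q⁻¹ = 1 := mul_inv_cancel₀ hqne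
      nlinarith [h]
    have hDne : (q+1)^2 - q * x^2 ≠ 0 := ne_of_gt hDpos
    have hs2pos : 0 < s^2 := by positivity
    have hmixpos : 0 < s^2 + c^2*x^2 := by positivity
    have hmixne : s^2 + c^2*x^2 ≠ 0 := ne_of_gt hmixpos
    have e1 : 1 / (s/2) * (2⁻¹ * (1:ℝ)) = 1/s := by
      field_simp
    have e2 : (c * s - c * x * (-(2*x)/(2*s))) / s^2 = c*(s^2+x^2)/s^3 := by
      field_simp
      ring
    have e3 : 1/(1 + (c * x / s)^2) = s^2/(s^2 + c^2*x^2) := by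
      rw [show 1 + (c * x / s)^2 = (s^2 + c^2*x^2)/s^2 by field_simp,
        one_div, inv_div]
    have e4 : 1/s - c * (s^2/(s^2 + c^2*x^2) * (c*(s^2+x^2)/s^3))
        = s*(1-c^2)/(s^2+c^2*x^2) := by
      field_simp
      ring
    have hkey : s^2 + c^2 * x^2 = 4*((q+1)^2 - q*x^2)/(q+1)^2 := by
      rw [hsq, hc]; unfold cq
      field_simp
      ring
    have h1c : 1 - c^2 = 4*q/(q+1)^2 := by
      rw [hc]; unfold cq
      field_simp
      ring
    have hD' : q + 2 + q⁻¹ - x^2 = ((q+1)^2 - q*x^2)/q := by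
      field_simp; ring
    rw [hD', e1, e2, e3, e4, hkey, h1c]
    field_simp
    ring
  have hint : IntervalIntegrable (fun x => vietaFibR 0 x * dens q x) volume (-2) 2 :=
    integ hq (contVF 0)
  have htop : Tendsto F (𝓝[<] (2:ℝ)) (𝓝 (((q+1)/(2*π)) * (π/2 - c * (π/2)))) := by
    apply Tendsto.const_mul
    apply Tendsto.sub
    · have hca : Continuous (fun x : ℝ => Real.arcsin (x/2)) :=
        Real.continuous_arcsin.comp (continuous_id.div_const 2)
      have := (hca.tendsto 2).mono_left (nhdsWithin_le_nhds (s := Iio (2:ℝ)))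
      simpa [Real.arcsin_one] using this
    · apply Tendsto.const_mul
      have hu : Tendsto (fun x : ℝ => c * x / Real.sqrt (4 - x^2)) (𝓝[<] 2) atTop := by
        simp_rw [div_eq_mul_inv]
        exact Filter.Tendsto.pos_mul_atTop (by linarith : (0:ℝ) < c * 2)
          (((continuous_const.mul continuous_id).tendsto 2).mono_left nhdsWithin_le_nhds)
          sqrt4sub_tendsto_top
      exact (Real.tendsto_arctan_atTop.mono_right nhdsWithin_le_nhds).comp hu
  have hbot : Tendsto F (𝓝[>] (-2:ℝ)) (𝓝 (((q+1)/(2*π)) * (-(π/2) - c * (-(π/2))))) := by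
    apply Tendsto.const_mul
    apply Tendsto.sub
    · have hca : Continuous (fun x : ℝ => Real.arcsin (x/2)) :=
        Real.continuous_arcsin.comp (continuous_id.div_const 2)
      have := (hca.tendsto (-2)).mono_left (nhdsWithin_le_nhds (s := Ioi (-2:ℝ)))
      simpa [Real.arcsin_neg_one, show (-2:ℝ)/2 = -1 by norm_num] using this
    · apply Tendsto.const_mul
      have hu : Tendsto (fun x : ℝ => c * x / Real.sqrt (4 - x^2)) (𝓝[>] (-2)) atBot := by
        simp_rw [div_eq_mul_inv]
        exact Filter.Tendsto.neg_mul_atTop (by linarith : c * (-2) < 0)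
          (((continuous_const.mul continuous_id).tendsto (-2)).mono_left nhdsWithin_le_nhds)
          sqrt4sub_tendsto_top'
      exact (Real.tendsto_arctan_atBot.mono_right nhdsWithin_le_nhds).comp hu
  have := intervalIntegral.integral_eq_sub_of_hasDerivAt_of_tendsto (a := (-2:ℝ)) (b := 2)
    (by norm_num) hderiv hint hbot htop
  rw [Mom, this]
  rw [hc]; unfold cq
  have hq1 : q + 1 ≠ 0 := by positivity
  field_simp
  ring

end VF

namespace VF
variable {q : ℝ}

lemma dens_even (x : ℝ) : dens q (-x) = dens q x := by
  unfold dens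
  rw [neg_pow]
  norm_num

lemma Mom_odd (hq : 1 < q) (r : ℕ) (hr : r % 2 = 1) : Mom q r = 0 := by
  have h := intervalIntegral.integral_comp_neg (a := (-2:ℝ)) (b := 2)
    (f := fun x => vietaFibR r x * dens q x)
  have hodd : ∀ x : ℝ, vietaFibR r (-x) * dens q (-x) = -(vietaFibR r x * dens q x) := by
    intro x
    rw [parity, dens_even, Odd.neg_one_pow (Nat.odd_iff.2 hr)]
    ring
  simp only [hodd, neg_neg] at h
  rw [intervalIntegral.integral_neg] at h
  unfold Mom
  linarith [h]

lemma square_eval (hq : 1 < q) (r : ℕ) :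
    ∫ x in (-2:ℝ)..2, (x^2 * vietaFibR r x) * dens q x
      = ((Real.sqrt q)⁻¹ + Real.sqrt q) ^ 2 * Mom q r
        - ((q+1)/(2*π)) * ∫ x in (-2:ℝ)..2, vietaFibR r x * Real.sqrt (4 - x^2) := by
  have hπ : (0:ℝ) < π := Real.pi_pos
  have hcongr : ∀ x ∈ uIcc (-2:ℝ) 2,
      (x^2 * vietaFibR r x) * dens q x
        = ((Real.sqrt q)⁻¹ + Real.sqrt q) ^ 2 * (vietaFibR r x * dens q x)
          - ((q+1)/(2*π)) * (vietaFibR r x * Real.sqrt (4 - x^2)) := by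
    intro x hx
    rw [uIcc_of_le (by norm_num : (-2:ℝ) ≤ 2)] at hx
    have hpos := denpos hq hx
    have hne := ne_of_gt hpos
    have hdens : ((((Real.sqrt q)⁻¹ + Real.sqrt q) ^ 2 - x ^ 2)) * dens q x
        = (1 / (2 * π)) * ((q + 1) * Real.sqrt (4 - x ^ 2)) := by
      unfold dens
      rw [mul_comm, div_mul_cancel₀ _ hne]
    linear_combination (-(vietaFibR r x)) * hdens
  have hcont4 : Continuous fun x : ℝ => vietaFibR r x * Real.sqrt (4 - x^2) :=
    (contVF r).mul (Real.continuous_sqrt.comp (by continuity))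
  rw [intervalIntegral.integral_congr hcongr]
  rw [intervalIntegral.integral_sub ((integ hq (contVF r)).const_mul _)
    ((hcont4.intervalIntegrable _ _).const_mul _)]
  rw [intervalIntegral.integral_const_mul, intervalIntegral.integral_const_mul]
  rfl

lemma xsq_mul (r : ℕ) (x : ℝ) :
    x^2 * vietaFibR (r+2) x
      = vietaFibR (r+4) x + 2 * vietaFibR (r+2) x + vietaFibR r x := by
  linear_combination x * mulX (r+1) x + mulX (r+2) x + mulX r x

lemma Mom_rec (hq : 1 < q) (r : ℕ) :
    Mom q (r+4) = (q + q⁻¹) * Mom q (r+2) - Mom q r := by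
  have h1 : ∫ x in (-2:ℝ)..2, (x^2 * vietaFibR (r+2) x) * dens q x
      = Mom q (r+4) + 2 * Mom q (r+2) + Mom q r := by
    have : ∀ x, (x^2 * vietaFibR (r+2) x) * dens q x
        = vietaFibR (r+4) x * dens q x + 2 * (vietaFibR (r+2) x * dens q x)
          + vietaFibR r x * dens q x := by
      intro x
      rw [xsq_mul]
      ring
    simp_rw [this]
    rw [intervalIntegral.integral_add (((integ hq (contVF (r+4))).add
        ((integ hq (contVF (r+2))).const_mul 2))) (integ hq (contVF r)),
      intervalIntegral.integral_add (integ hq (contVF (r+4)))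
        ((integ hq (contVF (r+2))).const_mul 2),
      intervalIntegral.integral_const_mul]
    rfl
  have h2 := square_eval hq (r+2)
  rw [show r + 2 + 2 = r + 4 from rfl] at h1
  rw [Npos (r+1)] at h2
  rw [h1] at h2
  rw [Asq_eq hq] at h2
  linarith [h2]

lemma Mom_two (hq : 1 < q) : Mom q 2 = q⁻¹ := by
  have h1 : ∫ x in (-2:ℝ)..2, (x^2 * vietaFibR 0 x) * dens q x
      = Mom q 2 + Mom q 0 := by
    have : ∀ x : ℝ, (x^2 * vietaFibR 0 x) * dens q x
        = vietaFibR 2 x * dens q x + vietaFibR 0 x * dens q x := by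
      intro x
      have h := mulX 0 x
      simp only [vf0, vf1, mul_one] at h ⊢
      have h2 : vietaFibR 2 x = x * x - 1 := rfl
      rw [h2]
      ring
    simp_rw [this]
    rw [intervalIntegral.integral_add (integ hq (contVF 2)) (integ hq (contVF 0))]
    rfl
  have h2 := square_eval hq 0
  have hN0 : ∫ x in (-2:ℝ)..2, vietaFibR 0 x * Real.sqrt (4 - x^2) = 2*π := by
    simp only [vf0, one_mul]
    exact N0
  rw [hN0, h1, Mom_zero hq, Asq_eq hq] at h2
  have hπ : (0:ℝ) < π := Real.pi_pos
  have : Mom q 2 + 1 = (q + 2 + q⁻¹) * 1 - (q+1)/(2*π) * (2*π) := h2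
  have hh : (q+1)/(2*π) * (2*π) = q + 1 := by field_simp
  rw [hh] at this
  linarith [this]

lemma Mom_even (hq : 1 < q) (k : ℕ) : Mom q (2*k) = (q⁻¹)^k := by
  induction k using Nat.twoStepInduction with
  | zero => simpa using Mom_zero hq
  | one => simpa using Mom_two hq
  | more k h1 h2 =>
    have hr := Mom_rec hq (2*k)
    rw [show 2*k+4 = 2*(k+2) from by ring, show 2*k+2 = 2*(k+1) from by ring] at hr
    rw [hr, h1, h2]
    have hqne : q ≠ 0 := ne_of_gt (hq0 hq)
    field_simp
    have hqi : q * q⁻¹ = 1 := mul_inv_cancel₀ hqne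
    linear_combination (q - q⁻¹) * q⁻¹ ^ k * hqi

lemma Mom_val (hq : 1 < q) (r : ℕ) :
    Mom q r = if r % 2 = 0 then (q⁻¹)^(r/2) else 0 := by
  rcases Nat.even_or_odd r with he | ho
  · obtain ⟨k, rfl⟩ := he
    rw [if_pos (by omega)]
    rw [show k + k = 2*k from by ring, Mom_even hq]
    congr 1
    omega
  · have hr := Nat.odd_iff.1 ho
    rw [if_neg (by omega), Mom_odd hq r hr]

end VF




namespace VF
variable {q : ℝ}

lemma dens_measurable : Measurable (dens q) := by
  unfold dens
  exact ((continuous_const.mul (continuous_const.mul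
    (Real.continuous_sqrt.comp (by continuity)))).measurable).div
    ((continuous_const.sub (continuous_pow 2)).measurable)

lemma reduce (hq : 1 < q) {f : ℝ → ℝ} (hf : Continuous f) :
    ∫ x, f x ∂kestenMcKay q = ∫ x in (-2:ℝ)..2, f x * dens q x := by
  set w : ℝ → ℝ := fun x => if x ∈ Icc (-2:ℝ) 2 then dens q x else 0 with hw
  have hw_meas : Measurable w :=
    Measurable.ite measurableSet_Icc dens_measurable measurable_const
  have hw_nonneg : ∀ x, 0 ≤ w x := by
    intro x
    show 0 ≤ if x ∈ Icc (-2:ℝ) 2 then dens q x else 0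
    split_ifs with h
    · exact dens_nonneg hq h
    · exact le_refl 0
  have hKM : kestenMcKay q = volume.withDensity (fun x => ENNReal.ofReal (w x)) := rfl
  rw [hKM]
  have h1 : ∫ x, f x ∂(volume.withDensity fun x => ENNReal.ofReal (w x))
      = ∫ x, (Real.toNNReal (w x) : ℝ≥0) • f x := by
    exact integral_withDensity_eq_integral_smul
      (f := fun x => Real.toNNReal (w x)) (hw_meas.real_toNNReal) f
  rw [h1]
  have h2 : ∀ x, (Real.toNNReal (w x) : ℝ≥0) • f x
      = Set.indicator (Icc (-2:ℝ) 2) (fun x => dens q x * f x) x := by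
    intro x
    rw [NNReal.smul_def, Real.coe_toNNReal _ (hw_nonneg x)]
    by_cases h : x ∈ Icc (-2:ℝ) 2
    · rw [Set.indicator_of_mem h]
      show (if x ∈ Icc (-2:ℝ) 2 then dens q x else 0) • f x = dens q x * f x
      rw [if_pos h, smul_eq_mul]
    · rw [Set.indicator_of_notMem h]
      show (if x ∈ Icc (-2:ℝ) 2 then dens q x else 0) • f x = 0
      rw [if_neg h, zero_smul]
  simp_rw [h2]
  rw [integral_indicator measurableSet_Icc, integral_Icc_eq_integral_Ioc,
    ← intervalIntegral.integral_of_le (by norm_num : (-2:ℝ) ≤ 2)]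
  exact intervalIntegral.integral_congr (fun x _ => mul_comm _ _)

lemma KK (hq : 1 < q) (a b : ℕ) (hba : b ≤ a) :
    ∫ x in (-2:ℝ)..2, vietaFibR a x * vietaFibR b x * dens q x
      = ∑ k ∈ Finset.range (b+1), Mom q (a - b + 2*k) := by
  have hptw : ∀ x, vietaFibR a x * vietaFibR b x * dens q x
      = ∑ k ∈ Finset.range (b+1), vietaFibR (a - b + 2*k) x * dens q x := by
    intro x
    rw [prodForm b a hba x, Finset.sum_mul]
  simp_rw [hptw]
  rw [intervalIntegral.integral_finset_sum (fun i _ => integ hq (contVF _))]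
  rfl

lemma KScomm (a b : ℕ) :
    ∫ x in (-2:ℝ)..2, vietaFibR a x * vietaFibR b x * dens q x
      = ∫ x in (-2:ℝ)..2, vietaFibR b x * vietaFibR a x * dens q x :=
  intervalIntegral.integral_congr (fun x _ => by ring)

lemma KSodd (hq : 1 < q) {a b : ℕ} (h : (a + b) % 2 = 1) :
    ∫ x in (-2:ℝ)..2, vietaFibR a x * vietaFibR b x * dens q x = 0 := by
  rcases le_total b a with hba | hab
  · rw [KK hq a b hba]
    apply Finset.sum_eq_zero
    intro k _
    rw [Mom_val hq, if_neg (by omega)]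
  · rw [KScomm, KK hq b a hab]
    apply Finset.sum_eq_zero
    intro k _
    rw [Mom_val hq, if_neg (by omega)]

lemma KSe (hq : 1 < q) (e b : ℕ) :
    ∫ x in (-2:ℝ)..2, vietaFibR (b + 2*e) x * vietaFibR b x * dens q x
      = (q⁻¹)^e * ∑ k ∈ Finset.range (b+1), (q⁻¹)^k := by
  rw [KK hq (b + 2*e) b (by omega)]
  have hterm : ∀ k ∈ Finset.range (b+1),
      Mom q (b + 2*e - b + 2*k) = (q⁻¹)^e * (q⁻¹)^k := by
    intro k _
    rw [show b + 2*e - b + 2*k = 2*(e+k) from by omega, Mom_even hq, pow_add]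
  rw [Finset.sum_congr rfl hterm, ← Finset.mul_sum]

lemma KSe' (hq : 1 < q) (e b : ℕ) :
    ∫ x in (-2:ℝ)..2, vietaFibR b x * vietaFibR (b + 2*e) x * dens q x
      = (q⁻¹)^e * ∑ k ∈ Finset.range (b+1), (q⁻¹)^k := by
  rw [KScomm]
  exact KSe hq e b

lemma Sdiff (b : ℕ) :
    ∑ k ∈ Finset.range (b+3), (q⁻¹)^k
      = 1 + q⁻¹ + (q⁻¹)^2 * ∑ k ∈ Finset.range (b+1), (q⁻¹)^k := by
  rw [Finset.sum_range_succ' _ (b+2), Finset.sum_range_succ' _ (b+1)]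
  have h1 : ∑ k ∈ Finset.range (b+1), (q⁻¹:ℝ)^(k+1+1)
      = (q⁻¹)^2 * ∑ k ∈ Finset.range (b+1), (q⁻¹)^k := by
    rw [Finset.mul_sum]
    exact Finset.sum_congr rfl (fun k _ => by ring)
  rw [h1]
  norm_num
  ring

lemma contVFq (r : ℕ) : Continuous (vietaFibRq q r) := by
  unfold vietaFibRq
  rcases le_or_gt 2 r with h | h
  · simp only [if_pos h]
    exact (contVF r).sub (continuous_const.mul (contVF (r-2)))
  · simp only [if_neg (not_le.2 h)]
    exact (contVF r).sub continuous_const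

end VF

namespace VF
variable {q : ℝ}

lemma KSe0 (hq : 1 < q) (b : ℕ) :
    ∫ x in (-2:ℝ)..2, vietaFibR b x * vietaFibR b x * dens q x
      = ∑ k ∈ Finset.range (b+1), (q⁻¹)^k := by
  simpa using KSe hq 0 b

theorem aux (hq : 1 < q) (m n : ℕ) (hmn : m ≤ n) :
    ∫ x, vietaFibRq q n x * vietaFibRq q m x ∂kestenMcKay q =
      if m = n then (if m = 0 then 1 else 1 + q⁻¹) else 0 := by
  rw [reduce hq (f := fun x => vietaFibRq q n x * vietaFibRq q m x) ((contVFq n).mul (contVFq m))]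
  by_cases hm2 : 2 ≤ m
  · -- 2 ≤ m ≤ n
    have hn2 : 2 ≤ n := le_trans hm2 hmn
    obtain ⟨m', rfl⟩ : ∃ m', m = m' + 2 := ⟨m - 2, by omega⟩
    have hptw : ∀ x, vietaFibRq q n x * vietaFibRq q (m'+2) x * dens q x
        = vietaFibR n x * vietaFibR (m'+2) x * dens q x
          - q⁻¹ * (vietaFibR n x * vietaFibR m' x * dens q x)
          - q⁻¹ * (vietaFibR (n-2) x * vietaFibR (m'+2) x * dens q x)
          + (q⁻¹)^2 * (vietaFibR (n-2) x * vietaFibR m' x * dens q x) := by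
      intro x
      unfold vietaFibRq
      rw [if_pos hn2, if_pos (show 2 ≤ m' + 2 by omega)]
      have h2 : m' + 2 - 2 = m' := by omega
      rw [h2]
      ring
    rw [intervalIntegral.integral_congr (fun x _ => hptw x)]
    have i1 := integ hq (f := fun x => vietaFibR (n) x * vietaFibR (m'+2) x) ((contVF n).mul (contVF (m'+2)))
    have i2 := integ hq (f := fun x => vietaFibR (n) x * vietaFibR (m') x) ((contVF n).mul (contVF m'))
    have i3 := integ hq (f := fun x => vietaFibR (n-2) x * vietaFibR (m'+2) x) ((contVF (n-2)).mul (contVF (m'+2)))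
    have i4 := integ hq (f := fun x => vietaFibR (n-2) x * vietaFibR (m') x) ((contVF (n-2)).mul (contVF m'))
    rw [intervalIntegral.integral_add ((i1.sub (i2.const_mul _)).sub (i3.const_mul _))
        (i4.const_mul _),
      intervalIntegral.integral_sub (i1.sub (i2.const_mul _)) (i3.const_mul _),
      intervalIntegral.integral_sub i1 (i2.const_mul _),
      intervalIntegral.integral_const_mul, intervalIntegral.integral_const_mul,
      intervalIntegral.integral_const_mul]
    by_cases heq : m' + 2 = n
    · subst heq
      rw [if_pos rfl, if_neg (by omega)]
      have hA := KSe0 hq (m'+2)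
      have hB : ∫ x in (-2:ℝ)..2, vietaFibR (m'+2) x * vietaFibR m' x * dens q x
          = q⁻¹ * ∑ k ∈ Finset.range (m'+1), (q⁻¹)^k := by
        simpa using KSe hq 1 m'
      have hC : ∫ x in (-2:ℝ)..2, vietaFibR (m'+2-2) x * vietaFibR (m'+2) x * dens q x
          = q⁻¹ * ∑ k ∈ Finset.range (m'+1), (q⁻¹)^k := by
        rw [show m'+2-2 = m' from by omega]
        simpa using KSe' hq 1 m'
      have hD : ∫ x in (-2:ℝ)..2, vietaFibR (m'+2-2) x * vietaFibR m' x * dens q x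
          = ∑ k ∈ Finset.range (m'+1), (q⁻¹)^k := by
        rw [show m'+2-2 = m' from by omega]
        exact KSe0 hq m'
      rw [hA, hB, hC, hD, show m'+2+1 = m'+3 from rfl, Sdiff m']
      ring
    · rw [if_neg heq]
      by_cases hpar : (n + m') % 2 = 0
      · obtain ⟨e, rfl⟩ : ∃ e, n = m' + 2 + 2*(e+1) := ⟨(n - m' - 4)/2, by omega⟩
        have hA := KSe hq (e+1) (m'+2)
        have hB : ∫ x in (-2:ℝ)..2, vietaFibR (m'+2+2*(e+1)) x * vietaFibR m' x * dens q x
            = (q⁻¹)^(e+2) * ∑ k ∈ Finset.range (m'+1), (q⁻¹)^k := by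
          rw [show m'+2+2*(e+1) = m' + 2*(e+2) from by omega]
          exact KSe hq (e+2) m'
        have hC : ∫ x in (-2:ℝ)..2, vietaFibR (m'+2+2*(e+1)-2) x * vietaFibR (m'+2) x * dens q x
            = (q⁻¹)^e * ∑ k ∈ Finset.range (m'+3), (q⁻¹)^k := by
          rw [show m'+2+2*(e+1)-2 = (m'+2) + 2*e from by omega]
          exact KSe hq e (m'+2)
        have hD : ∫ x in (-2:ℝ)..2, vietaFibR (m'+2+2*(e+1)-2) x * vietaFibR m' x * dens q x
            = (q⁻¹)^(e+1) * ∑ k ∈ Finset.range (m'+1), (q⁻¹)^k := by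
          rw [show m'+2+2*(e+1)-2 = m' + 2*(e+1) from by omega]
          exact KSe hq (e+1) m'
        rw [hA, hB, hC, hD]
        ring
      · have hA := KSodd hq (a := n) (b := m'+2) (by omega)
        have hB := KSodd hq (a := n) (b := m') (by omega)
        have hC := KSodd hq (a := n-2) (b := m'+2) (by omega)
        have hD := KSodd hq (a := n-2) (b := m') (by omega)
        rw [hA, hB, hC, hD]
        ring
  · by_cases hn2 : 2 ≤ n
    · -- m < 2 ≤ n
      have hptw : ∀ x, vietaFibRq q n x * vietaFibRq q m x * dens q x
          = vietaFibR n x * vietaFibR m x * dens q x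
            - q⁻¹ * (vietaFibR (n-2) x * vietaFibR m x * dens q x) := by
        intro x
        unfold vietaFibRq
        rw [if_pos hn2, if_neg hm2]
        ring
      rw [intervalIntegral.integral_congr (fun x _ => hptw x)]
      have i1 := integ hq (f := fun x => vietaFibR (n) x * vietaFibR (m) x) ((contVF n).mul (contVF m))
      have i2 := integ hq (f := fun x => vietaFibR (n-2) x * vietaFibR (m) x) ((contVF (n-2)).mul (contVF m))
      rw [intervalIntegral.integral_sub i1 (i2.const_mul _),
        intervalIntegral.integral_const_mul]
      rw [if_neg (by omega)]
      by_cases hpar : (n + m) % 2 = 0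
      · obtain ⟨e, rfl⟩ : ∃ e, n = m + 2*(e+1) := ⟨(n - m - 2)/2, by omega⟩
        have hA := KSe hq (e+1) m
        have hB : ∫ x in (-2:ℝ)..2, vietaFibR (m+2*(e+1)-2) x * vietaFibR m x * dens q x
            = (q⁻¹)^e * ∑ k ∈ Finset.range (m+1), (q⁻¹)^k := by
          rw [show m+2*(e+1)-2 = m + 2*e from by omega]
          exact KSe hq e m
        rw [hA, hB]
        ring
      · rw [KSodd hq (a := n) (b := m) (by omega),
          KSodd hq (a := n-2) (b := m) (by omega)]
        ring
    · -- m ≤ n ≤ 1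
      have hn1 : n ≤ 1 := by omega
      have hm1 : m ≤ 1 := by omega
      have hptw : ∀ x, vietaFibRq q n x * vietaFibRq q m x * dens q x
          = vietaFibR n x * vietaFibR m x * dens q x := by
        intro x
        unfold vietaFibRq
        rw [if_neg hn2, if_neg hm2]
        ring
      rw [intervalIntegral.integral_congr (fun x _ => hptw x)]
      interval_cases n <;> interval_cases m
      · rw [KSe0 hq 0]
        norm_num
      · rw [KSodd hq (a := 1) (b := 0) (by omega)]
        norm_num
      · rw [KSe0 hq 1]
        rw [Finset.sum_range_succ, Finset.sum_range_one]
        norm_num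
  
theorem vietaFibq_orthogonal_kestenMcKay' (q : ℝ) (hq : 1 < q) (m n : ℕ) :
    ∫ x, vietaFibRq q n x * vietaFibRq q m x ∂kestenMcKay q =
      if m = n then (if m = 0 then 1 else 1 + q⁻¹) else 0 := by
  rcases le_total m n with h | h
  · exact aux hq m n h
  · have hsw := aux hq n m h
    have hcomm : (fun x => vietaFibRq q n x * vietaFibRq q m x)
        = fun x => vietaFibRq q m x * vietaFibRq q n x := funext fun x => mul_comm _ _
    rw [show (∫ x, vietaFibRq q n x * vietaFibRq q m x ∂kestenMcKay q)
        = ∫ x, vietaFibRq q m x * vietaFibRq q n x ∂kestenMcKay q from by rw [hcomm]]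
    rw [hsw]
    by_cases hmn : m = n
    · subst hmn
      simp
    · rw [if_neg hmn, if_neg (fun hh => hmn hh.symm)]

end VF

theorem vietaFibq_orthogonal_kestenMcKay (q : ℝ) (hq : 1 < q) (m n : ℕ) :
    ∫ x, vietaFibRq q n x * vietaFibRq q m x ∂kestenMcKay q =
      if m = n then (if m = 0 then 1 else 1 + q⁻¹) else 0 := by
  exact VF.vietaFibq_orthogonal_kestenMcKay' q hq m n
end

section
/- Let G be a finite (q+1)-regular graph, let f_r be the number of closed non-backtracking walks of length r and c_r the number of circuits of length r (closed non-backtracking walks whose last edge is also not the reverse of the first edge). Then for r \ge 1: f_r = c_r + (q-1)\sum_{1 \le i < r/2} q^{i-1} c_{r-2i}. -/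
open SimpleGraph

/-- The number of closed non-backtracking walks of length `r` based at `a` in `G`. -/
noncomputable def closedNbWalkCount {V : Type*} (G : SimpleGraph V) (r : ℕ) (a : V) : ℕ :=
  Nat.card {p : G.Walk a a //
    p.length = r ∧ List.Chain' (fun d₁ d₂ => d₂ ≠ d₁.symm) p.darts}

/-- The number of circuits of length `r` based at `a` in `G`: closed non-backtracking
walks such that, additionally, the first dart is not the reverse of the last dart
(the wrap-around non-backtracking condition, encoded by appending the first dart
to the end of the dart list). -/
noncomputable def circuitCount {V : Type*} (G : SimpleGraph V) (r : ℕ) (a : V) : ℕ :=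
  Nat.card {p : G.Walk a a //
    p.length = r ∧ List.Chain' (fun d₁ d₂ => d₂ ≠ d₁.symm) (p.darts ++ p.darts.take 1)}

section Aux


variable {V : Type*} {G : SimpleGraph V}

private lemma dart_symm_inj : Function.Injective (Dart.symm : G.Dart → G.Dart) :=
  Dart.symm_involutive.injective

lemma chain'_decomp (d : G.Dart) (l : List G.Dart) (hl : l ≠ []) :
    List.Chain' (fun d₁ d₂ => d₂ ≠ d₁.symm) (d :: (l ++ [d.symm])) ↔
      List.Chain' (fun d₁ d₂ => d₂ ≠ d₁.symm) l ∧
        (∀ z ∈ l.head?, z ≠ d.symm) ∧ (∀ z ∈ l.getLast?, z ≠ d) := by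
  have h1 : d :: (l ++ [d.symm]) = (d :: l) ++ [d.symm] := rfl
  unfold List.Chain'
  rw [h1, List.isChain_append, List.isChain_cons]
  have h2 : (d :: l).getLast? = l.getLast? := by
    cases l with
    | nil => exact absurd rfl hl
    | cons a t => exact List.getLast?_cons_cons
  rw [h2]
  simp only [List.head?_cons, Option.mem_some_iff, List.isChain_singleton, true_and]
  constructor
  · rintro ⟨⟨hh, hc⟩, hlast⟩
    refine ⟨hc, hh, fun z hz hzd => ?_⟩
    exact (hlast z hz d.symm rfl) (by rw [hzd])
  · rintro ⟨hc, hh, hlast⟩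
    refine ⟨⟨hh, hc⟩, fun x hx y hy => ?_⟩
    subst hy
    intro hcontra
    exact hlast x hx (dart_symm_inj (by simpa using hcontra.symm))

lemma not_circ_decomp (d : G.Dart) (l : List G.Dart) :
    ¬ List.Chain' (fun d₁ d₂ => d₂ ≠ d₁.symm) ((d :: (l ++ [d.symm])) ++ [d]) := by
  intro h
  have h1 : d :: (l ++ [d.symm]) = (d :: l) ++ [d.symm] := rfl
  rw [h1] at h
  obtain ⟨-, -, h3⟩ := List.isChain_append.mp h
  exact h3 d.symm (by rw [List.getLast?_concat]; rfl) d rfl (by simp)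

lemma circ_iff (l : List G.Dart) (hl : l ≠ [])
    (hc : List.Chain' (fun d₁ d₂ => d₂ ≠ d₁.symm) l) :
    List.Chain' (fun d₁ d₂ => d₂ ≠ d₁.symm) (l ++ l.take 1) ↔
      (l.head hl).symm ≠ l.getLast hl := by
  have ht : l.take 1 = [l.head hl] := by
    obtain ⟨x, t, rfl⟩ := List.exists_cons_of_ne_nil hl
    rfl
  unfold List.Chain' at hc ⊢
  rw [ht, List.isChain_append]
  simp only [hc, true_and, List.isChain_singleton, true_and, List.head?_cons,
    Option.mem_some_iff]
  rw [List.getLast?_eq_getLast hl]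
  constructor
  · intro h hcontra
    exact h (l.getLast hl) rfl (l.head hl) rfl (by rw [← hcontra]; simp)
  · rintro h z hz y rfl heq
    rw [Option.mem_some_iff] at hz
    subst hz
    exact h (by rw [heq]; simp)

def Wset (G : SimpleGraph V) (n : ℕ) (a : V) : Set (G.Walk a a) :=
  {p | p.length = n ∧ List.Chain' (fun d₁ d₂ => d₂ ≠ d₁.symm) p.darts}

def Cset (G : SimpleGraph V) (n : ℕ) (a : V) : Set (G.Walk a a) :=
  {p | p.length = n ∧
    List.Chain' (fun d₁ d₂ => d₂ ≠ d₁.symm) (p.darts ++ p.darts.take 1)}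

lemma Cset_subset (n : ℕ) (a : V) : Cset G n a ⊆ Wset G n a := by
  rintro p ⟨h1, h2⟩
  exact ⟨h1, (List.isChain_append.mp h2).1⟩

lemma Wset_finite [Fintype V] (n : ℕ) (a : V) : (Wset G n a).Finite := by
  classical
  exact (Set.toFinite {p : G.Walk a a | p.length = n}).subset fun p hp => hp.1

lemma Cset_finite [Fintype V] (n : ℕ) (a : V) : (Cset G n a).Finite :=
  (Wset_finite n a).subset (Cset_subset n a)

lemma card_split [Fintype V] (n : ℕ) (a : V) :
    Nat.card ↥(Wset G n a) =
      Nat.card ↥(Cset G n a) + Nat.card ↥(Wset G n a \ Cset G n a) := by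
  rw [Nat.card_coe_set_eq, Nat.card_coe_set_eq, Nat.card_coe_set_eq]
  have h := Set.ncard_diff_add_ncard_of_subset (Cset_subset (G := G) n a)
    (Wset_finite n a)
  omega

lemma Wset_one (a : V) : Wset G 1 a = ∅ := by
  ext p
  simp only [Set.mem_empty_iff_false, iff_false, Wset, Set.mem_setOf_eq]
  rintro ⟨h1, -⟩
  exact G.irrefl (p.adj_of_length_eq_one h1)

lemma Wset_two (a : V) : Wset G 2 a = ∅ := by
  ext p
  simp only [Set.mem_empty_iff_false, iff_false, Wset, Set.mem_setOf_eq]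
  rintro ⟨h1, h2⟩
  cases p with
  | nil => simp at h1
  | cons h q =>
    cases q with
    | nil => simp at h1
    | cons h' q' =>
      cases q' with
      | nil =>
        simp only [Walk.darts_cons, Walk.darts_nil] at h2
        unfold List.Chain' at h2
        rw [List.isChain_cons_cons] at h2
        exact h2.1 rfl
      | cons h'' q'' => simp [Walk.length_cons] at h1

lemma card_noncirc [Fintype V] (m : ℕ) (hm : 1 ≤ m) :
    Nat.card ((b : V) × (w : ↥(Wset G m b)) ×
        {d : G.Dart // d.snd = b ∧ (∀ z ∈ (w : G.Walk b b).darts.head?, z ≠ d.symm) ∧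
          (∀ z ∈ (w : G.Walk b b).darts.getLast?, z ≠ d)}) =
      Nat.card ((a : V) × ↥(Wset G (m+2) a \ Cset G (m+2) a)) := by
  classical
  have hdarts : ∀ (b : V) (w : G.Walk b b) (d : G.Dart) (hd : d.snd = b),
      (Walk.cons d.adj ((w.copy hd.symm hd.symm).concat d.symm.adj)).darts
        = d :: (w.darts ++ [d.symm]) := by
    intro b w d hd
    simp only [Walk.darts_cons, Walk.concat, Walk.darts_append, Walk.darts_copy]
    rfl
  have hne : ∀ (b : V) (w : ↥(Wset G m b)), (w : G.Walk b b).darts ≠ [] := by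
    intro b w
    have := w.2.1
    intro hcon
    rw [← Walk.length_darts, hcon] at this
    simp at this
    omega
  have hmem : ∀ (b : V) (w : ↥(Wset G m b)) (d : G.Dart) (hd : d.snd = b),
      (∀ z ∈ (w : G.Walk b b).darts.head?, z ≠ d.symm) →
      (∀ z ∈ (w : G.Walk b b).darts.getLast?, z ≠ d) →
      Walk.cons d.adj (((w : G.Walk b b).copy hd.symm hd.symm).concat d.symm.adj) ∈
        Wset G (m+2) d.fst \ Cset G (m+2) d.fst := by
    intro b w d hd h1 h2
    have hlen : (Walk.cons d.adj (((w : G.Walk b b).copy hd.symm hd.symm).concat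
        d.symm.adj)).length = m + 2 := by
      rw [← Walk.length_darts]; erw [hdarts b w.val d hd]; simp [w.2.1]
    refine ⟨⟨hlen, ?_⟩, ?_⟩
    · erw [hdarts b w.val d hd]
      exact (chain'_decomp d _ (hne b w)).mpr ⟨w.2.2, h1, h2⟩
    · rintro ⟨-, hC⟩
      erw [hdarts b w.val d hd] at hC
      have ht : (d :: ((w : G.Walk b b).darts ++ [d.symm])).take 1 = [d] := rfl
      rw [ht] at hC
      exact not_circ_decomp d _ hC
  refine Nat.card_eq_of_bijective
    (fun x => ⟨x.2.2.val.fst,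
      ⟨Walk.cons x.2.2.val.adj
        ((x.2.1.val.copy x.2.2.prop.1.symm x.2.2.prop.1.symm).concat x.2.2.val.symm.adj),
        hmem x.1 x.2.1 x.2.2.val x.2.2.prop.1 x.2.2.prop.2.1 x.2.2.prop.2.2⟩⟩)
    ⟨?_, ?_⟩
  · -- injective
    rintro ⟨b, w, dd⟩ ⟨b', w', dd'⟩ hxy
    have hde := congrArg
      (fun z : (a : V) × ↥(Wset G (m+2) a \ Cset G (m+2) a) =>
        (z.2 : G.Walk z.1 z.1).darts) hxy
    obtain ⟨h₁, h₂⟩ := List.cons.inj hde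
    have h₁' : (dd : G.Dart) = (dd' : G.Dart) := by
      injection h₁ with hp
      exact Dart.ext _ _ hp
    have hb : b = b' := by rw [← dd.2.1, ← dd'.2.1, h₁']
    subst hb
    simp only [Walk.concat, Walk.darts_append, Walk.darts_copy] at h₂
    have hwd : (w : G.Walk b b).darts = (w' : G.Walk b b).darts :=
      List.append_inj_left' h₂ rfl
    have hw : w = w' := Subtype.ext (Walk.darts_injective hwd)
    subst hw
    have hdd : dd = dd' := Subtype.ext h₁'
    subst hdd
    rfl
  · -- surjective
    rintro ⟨a, p, hp⟩
    obtain ⟨⟨hlen, hNB⟩, hnC⟩ := hp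
    cases p with
    | nil => simp at hlen
    | cons h q =>
      rename_i c
      cases q with
      | nil => simp [Walk.length_cons] at hlen
      | cons h₂ q₂ =>
        obtain ⟨x, rwalk, h', hq⟩ := Walk.exists_cons_eq_concat h₂ q₂
        rw [hq] at hlen hNB hnC
        have hlen' : rwalk.length = m := by
          simp only [Walk.length_cons, Walk.length_concat] at hlen
          omega
        have hrne : rwalk.darts ≠ [] := by
          intro hcon
          have := congrArg List.length hcon
          rw [Walk.length_darts, hlen'] at this
          simp at this
          omega
        have hdp : (Walk.cons h (rwalk.concat h')).darts
            = (⟨(a, c), h⟩ : G.Dart) :: (rwalk.darts ++ [(⟨(x, a), h'⟩ : G.Dart)]) := by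
          simp only [Walk.darts_cons, Walk.darts_concat, List.concat_eq_append]
        rw [hdp] at hNB
        have hnotr : (⟨(x, a), h'⟩ : G.Dart) = (⟨(a, c), h⟩ : G.Dart).symm := by
          by_contra hcon
          apply hnC
          refine ⟨hlen, ?_⟩
          rw [hdp]
          rw [show ((⟨(a, c), h⟩ : G.Dart) :: (rwalk.darts ++ [(⟨(x, a), h'⟩ : G.Dart)])).take 1
            = [(⟨(a, c), h⟩ : G.Dart)] from rfl]
          rw [show (⟨(a, c), h⟩ : G.Dart) :: (rwalk.darts ++ [(⟨(x, a), h'⟩ : G.Dart)])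
            = ((⟨(a, c), h⟩ : G.Dart) :: rwalk.darts) ++ [(⟨(x, a), h'⟩ : G.Dart)] from rfl]
          unfold List.Chain'
          rw [List.isChain_append]
          refine ⟨hNB, List.isChain_singleton _, ?_⟩
          intro z hz y hy
          rw [List.getLast?_concat, Option.mem_some_iff] at hz
          subst hz
          rw [List.head?_cons, Option.mem_some_iff] at hy
          subst hy
          exact fun hcc => hcon (by rw [hcc]; simp)
        have hx : x = c := congrArg (fun d : G.Dart => d.toProd.1) hnotr
        subst hx
        rw [hnotr] at hNB
        obtain ⟨hcr, hh1, hh2⟩ := (chain'_decomp _ _ hrne).mp hNB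
        refine ⟨⟨x, ⟨rwalk, ⟨hlen', hcr⟩⟩, ⟨⟨(a, x), h⟩, rfl, hh1, hh2⟩⟩, ?_⟩
        have hwalk : Walk.cons (⟨(a, x), h⟩ : G.Dart).adj
            ((rwalk.copy (rfl : (⟨(a, x), h⟩ : G.Dart).snd = x).symm
              (rfl : (⟨(a, x), h⟩ : G.Dart).snd = x).symm).concat
              (⟨(a, x), h⟩ : G.Dart).symm.adj)
            = Walk.cons h (Walk.cons h₂ q₂) := by
          rw [hq]
          apply Walk.darts_injective
          rw [hdarts x rwalk ⟨(a, x), h⟩ rfl]; erw [hdp]; rw [hnotr]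
        exact congrArg (fun z => (⟨a, z⟩ : (a : V) × ↥(Wset G (m+2) a \ Cset G (m+2) a)))
          (Subtype.ext hwalk)

lemma card_snd_subtype [Fintype V] [DecidableRel G.Adj] (b : V) :
    Nat.card {d : G.Dart // d.snd = b} = G.degree b := by
  have e : {d : G.Dart // d.snd = b} ≃ G.neighborSet b :=
    { toFun := fun d => ⟨d.val.fst, by
        have h := d.val.adj
        rw [d.prop] at h
        exact h.symm⟩
      invFun := fun n => ⟨⟨(n.val, b), n.prop.symm⟩, rfl⟩
      left_inv := by
        rintro ⟨d, rfl⟩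
        rfl
      right_inv := by
        intro n
        rfl }
  rw [Nat.card_congr e, Nat.card_eq_fintype_card, card_neighborSet_eq_degree]

open Classical in
lemma count_darts [Fintype V] [DecidableRel G.Adj] (q : ℕ)
    (hreg : G.IsRegularOfDegree (q + 1)) (b : V) (w : G.Walk b b) (hw : w.darts ≠ []) :
    Nat.card {d : G.Dart // d.snd = b ∧ (∀ z ∈ w.darts.head?, z ≠ d.symm) ∧
        (∀ z ∈ w.darts.getLast?, z ≠ d)} =
      if (w.darts.head hw).symm = w.darts.getLast hw then q else q - 1 := by
  classical
  set x : G.Dart := w.darts.head hw with hxdef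
  set y : G.Dart := w.darts.getLast hw with hydef
  have hx' : x.toProd.1 = b := by rw [hxdef, Walk.head_darts_eq_firstDart]; simp [Walk.firstDart_toProd]
  have hy : y.snd = b := by rw [hydef, Walk.getLast_darts_eq_lastDart]; simp [Walk.lastDart_toProd]
  have hhead : w.darts.head? = some x := List.head?_eq_head hw
  have hlast : w.darts.getLast? = some y := List.getLast?_eq_getLast hw
  have hfilter : (Finset.univ.filter (fun d : G.Dart => d.snd = b ∧
      (∀ z ∈ w.darts.head?, z ≠ d.symm) ∧ (∀ z ∈ w.darts.getLast?, z ≠ d)))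
      = (Finset.univ.filter (fun d : G.Dart => d.snd = b)) \ {x.symm, y} := by
    ext d
    simp only [Finset.mem_filter, Finset.mem_univ, true_and, Finset.mem_sdiff,
      Finset.mem_insert, Finset.mem_singleton, hhead, hlast]
    constructor
    · rintro ⟨h1, h2, h3⟩
      have h2' := h2 x rfl
      have h3' := h3 y rfl
      refine ⟨h1, ?_⟩
      rintro (rfl | rfl)
      · exact h2' (by simp)
      · exact h3' rfl
    · rintro ⟨h1, h2⟩
      refine ⟨h1, ?_, ?_⟩
      · intro z hz
        rw [Option.mem_some_iff] at hz
        subst hz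
        intro hcon
        exact h2 (Or.inl (by rw [hcon]; simp))
      · intro z hz
        rw [Option.mem_some_iff] at hz
        subst hz
        intro hcon
        exact h2 (Or.inr hcon.symm)
  have hsub : ({x.symm, y} : Finset G.Dart) ⊆
      Finset.univ.filter (fun d : G.Dart => d.snd = b) := by
    intro d hd
    simp only [Finset.mem_insert, Finset.mem_singleton] at hd
    rcases hd with rfl | rfl <;> simp [Finset.mem_filter, hx', hy]
  have h5 : (Finset.univ.filter (fun d : G.Dart => d.snd = b)).card = q + 1 := by
    rw [← Fintype.card_subtype, ← Nat.card_eq_fintype_card, card_snd_subtype b, hreg b]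
  rw [Nat.card_eq_fintype_card, Fintype.card_subtype, hfilter, Finset.card_sdiff_of_subset hsub, h5]
  by_cases hxy : x.symm = y
  · rw [if_pos hxy, hxy]
    simp
  · rw [if_neg hxy, Finset.card_pair hxy]
    omega

lemma darts_ne_nil {m : ℕ} (hm : 1 ≤ m) {b : V} {w : G.Walk b b}
    (hW : w ∈ Wset G m b) : w.darts ≠ [] := by
  intro hcon
  have := congrArg List.length hcon
  rw [Walk.length_darts, hW.1] at this
  simp at this
  omega

lemma mem_Cset_iff {m : ℕ} {b : V} {w : G.Walk b b} (hW : w ∈ Wset G m b)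
    (hw : w.darts ≠ []) :
    w ∈ Cset G m b ↔ (w.darts.head hw).symm ≠ w.darts.getLast hw := by
  have : w ∈ Cset G m b ↔
      List.Chain' (fun d₁ d₂ => d₂ ≠ d₁.symm) (w.darts ++ w.darts.take 1) := by
    simp only [Cset, Set.mem_setOf_eq, hW.1, true_and]
  rw [this, circ_iff _ hw hW.2]

open Classical in
lemma wkInnerSum [Fintype V] [DecidableRel G.Adj] (q : ℕ)
    (hreg : G.IsRegularOfDegree (q + 1)) (m : ℕ) (hm : 1 ≤ m) (b : V) :
    Nat.card ((w : ↥(Wset G m b)) ×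
        {d : G.Dart // d.snd = b ∧ (∀ z ∈ (w : G.Walk b b).darts.head?, z ≠ d.symm) ∧
          (∀ z ∈ (w : G.Walk b b).darts.getLast?, z ≠ d)}) =
      (q - 1) * Nat.card ↥(Cset G m b) + q * Nat.card ↥(Wset G m b \ Cset G m b) := by
  classical
  haveI : Fintype ↥(Wset G m b) := (Wset_finite m b).fintype
  rw [Nat.card_eq_fintype_card, Fintype.card_sigma]
  have hterm : ∀ w : ↥(Wset G m b), Fintype.card
      {d : G.Dart // d.snd = b ∧ (∀ z ∈ (w : G.Walk b b).darts.head?, z ≠ d.symm) ∧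
        (∀ z ∈ (w : G.Walk b b).darts.getLast?, z ≠ d)} =
      if (w : G.Walk b b) ∈ Cset G m b then q - 1 else q := by
    intro w
    have hne := darts_ne_nil (G := G) hm w.2
    rw [← Nat.card_eq_fintype_card, count_darts q hreg b w hne]
    by_cases hC : (w : G.Walk b b) ∈ Cset G m b
    · rw [if_pos hC, if_neg ((mem_Cset_iff w.2 hne).mp hC)]
    · rw [if_neg hC, if_pos (not_not.mp (fun hcc => hC ((mem_Cset_iff w.2 hne).mpr hcc)))]
  rw [Finset.sum_congr rfl (fun w _ => hterm w), Finset.sum_ite, Finset.sum_const,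
    Finset.sum_const, smul_eq_mul, smul_eq_mul]
  have hc1 : (Finset.univ.filter
      (fun w : ↥(Wset G m b) => (w : G.Walk b b) ∈ Cset G m b)).card =
      Nat.card ↥(Cset G m b) := by
    rw [← Fintype.card_subtype, ← Nat.card_eq_fintype_card]
    exact Nat.card_congr (Equiv.subtypeSubtypeEquivSubtype
      (fun {x} hx => Cset_subset m b hx))
  have hc2 : (Finset.univ.filter
      (fun w : ↥(Wset G m b) => ¬ (w : G.Walk b b) ∈ Cset G m b)).card =
      Nat.card ↥(Wset G m b \ Cset G m b) := by
    rw [← Fintype.card_subtype, ← Nat.card_eq_fintype_card]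
    have e : {w : ↥(Wset G m b) // (w : G.Walk b b) ∉ Cset G m b} ≃
        ↥(Wset G m b \ Cset G m b) :=
      Equiv.subtypeSubtypeEquivSubtypeInter (· ∈ Wset G m b) (· ∉ Cset G m b)
    exact Nat.card_congr e
  rw [hc1, hc2]
  ring

open Classical in
set_option maxHeartbeats 1000000 in
lemma wkRecursion [Fintype V] [DecidableRel G.Adj] (q : ℕ)
    (hreg : G.IsRegularOfDegree (q + 1)) (m : ℕ) (hm : 1 ≤ m) :
    ∑ a : V, Nat.card ↥(Wset G (m+2) a \ Cset G (m+2) a) =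
      (q - 1) * (∑ b : V, Nat.card ↥(Cset G m b)) +
        q * (∑ b : V, Nat.card ↥(Wset G m b \ Cset G m b)) := by
  classical
  haveI h1 : ∀ a : V, Fintype ↥(Wset G (m+2) a \ Cset G (m+2) a) := fun a =>
    ((Wset_finite (m+2) a).subset Set.diff_subset).fintype
  haveI h2 : ∀ b : V, Fintype ↥(Wset G m b) := fun b => (Wset_finite m b).fintype
  have e1 : Nat.card ((a : V) × ↥(Wset G (m+2) a \ Cset G (m+2) a)) =
      ∑ a : V, Nat.card ↥(Wset G (m+2) a \ Cset G (m+2) a) := by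
    rw [Nat.card_eq_fintype_card, Fintype.card_sigma]
    simp [Nat.card_eq_fintype_card]
  have e2 : Nat.card ((b : V) × (w : ↥(Wset G m b)) ×
        {d : G.Dart // d.snd = b ∧ (∀ z ∈ (w : G.Walk b b).darts.head?, z ≠ d.symm) ∧
          (∀ z ∈ (w : G.Walk b b).darts.getLast?, z ≠ d)}) =
      ∑ b : V, Nat.card ((w : ↥(Wset G m b)) ×
        {d : G.Dart // d.snd = b ∧ (∀ z ∈ (w : G.Walk b b).darts.head?, z ≠ d.symm) ∧
          (∀ z ∈ (w : G.Walk b b).darts.getLast?, z ≠ d)}) := by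
    rw [Nat.card_eq_fintype_card, Fintype.card_sigma]
    exact Finset.sum_congr rfl (fun b _ => (Nat.card_eq_fintype_card).symm)
  rw [← e1, ← card_noncirc m hm, e2]
  rw [Finset.sum_congr rfl (fun b _ => wkInnerSum q hreg m hm b)]
  rw [Finset.sum_add_distrib, Finset.mul_sum, Finset.mul_sum]

lemma arith_step (q m : ℕ) (T : ℕ → ℕ) :
    (q - 1) * T (m+1) + q * ((q - 1) *
        ∑ i ∈ Finset.Ico 1 ((m+2)/2), q^(i-1) * T (m+1-2*i)) =
      (q - 1) * ∑ i ∈ Finset.Ico 1 ((m+4)/2), q^(i-1) * T (m+3-2*i) := by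
  rw [Finset.sum_eq_sum_Ico_succ_bot (show 1 < (m+4)/2 by omega)]
  rw [Finset.sum_Ico_eq_sum_range, Finset.sum_Ico_eq_sum_range]
  have hub : (m+2)/2 - 1 = (m+4)/2 - 2 := by omega
  rw [hub]
  have h1 : m + 3 - 2*1 = m + 1 := by omega
  rw [h1]
  simp only [pow_zero, one_mul, Nat.sub_self]
  have hS : (∑ k ∈ Finset.range ((m+4)/2 - 2), q^(2+k-1) * T (m+3-2*(2+k))) =
      q * ∑ k ∈ Finset.range ((m+4)/2 - 2), q^(1+k-1) * T (m+1-2*(1+k)) := by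
    rw [Finset.mul_sum]
    refine Finset.sum_congr rfl fun k _ => ?_
    have e1 : 2+k-1 = (1+k-1)+1 := by omega
    have e2 : m+3-2*(2+k) = m+1-2*(1+k) := by omega
    rw [e1, e2, pow_succ]
    ring
  rw [hS, mul_add, mul_left_comm]

open Classical in
lemma main_aux [Fintype V] [DecidableRel G.Adj] (q : ℕ)
    (hreg : G.IsRegularOfDegree (q + 1)) :
    ∀ r : ℕ, 1 ≤ r →
      ∑ a : V, Nat.card ↥(Wset G r a \ Cset G r a) =
        (q - 1) * ∑ i ∈ Finset.Ico 1 ((r + 1) / 2),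
          q ^ (i - 1) * (∑ a : V, Nat.card ↥(Cset G (r - 2 * i) a)) := by
  intro r
  induction r using Nat.strong_induction_on with
  | _ r ih =>
    intro hr
    by_cases hr1 : r = 1
    · subst hr1
      have h0 : ∀ a : V, Wset G 1 a \ Cset G 1 a = ∅ := fun a => by
        rw [Wset_one]; exact Set.empty_diff _
      simp [h0]
    · by_cases hr2 : r = 2
      · subst hr2
        have h0 : ∀ a : V, Wset G 2 a \ Cset G 2 a = ∅ := fun a => by
          rw [Wset_two]; exact Set.empty_diff _
        simp [h0]
      · obtain ⟨m, rfl⟩ : ∃ m, r = m + 3 := ⟨r - 3, by omega⟩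
        have hrec : (∑ a : V, Nat.card ↥(Wset G (m+3) a \ Cset G (m+3) a)) =
            (q - 1) * (∑ b : V, Nat.card ↥(Cset G (m+1) b)) +
              q * (∑ b : V, Nat.card ↥(Wset G (m+1) b \ Cset G (m+1) b)) :=
          wkRecursion q hreg (m+1) (by omega)
        have hih : (∑ a : V, Nat.card ↥(Wset G (m+1) a \ Cset G (m+1) a)) =
            (q - 1) * ∑ i ∈ Finset.Ico 1 ((m+2) / 2),
              q ^ (i - 1) * (∑ a : V, Nat.card ↥(Cset G (m+1 - 2*i) a)) :=
          ih (m+1) (by omega) (by omega)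
        have hgoal : (∑ a : V, Nat.card ↥(Wset G (m+3) a \ Cset G (m+3) a)) =
            (q - 1) * ∑ i ∈ Finset.Ico 1 ((m+4) / 2),
              q ^ (i - 1) * (∑ a : V, Nat.card ↥(Cset G (m+3 - 2*i) a)) := by
          rw [hrec, hih]
          exact arith_step q m (fun n => ∑ a : V, Nat.card ↥(Cset G n a))
        exact hgoal


end Aux

theorem closedNbWalks_eq_circuit_sum {V : Type*} [Fintype V] (G : SimpleGraph V) [DecidableRel G.Adj]
    (q : ℕ) (hq : 1 ≤ q) (hreg : G.IsRegularOfDegree (q + 1)) (r : ℕ) (hr : 1 ≤ r) :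
    (∑ a : V, closedNbWalkCount G r a) =
      (∑ a : V, circuitCount G r a) +
        (q - 1) * ∑ i ∈ Finset.Ico 1 ((r + 1) / 2),
          q ^ (i - 1) * (∑ a : V, circuitCount G (r - 2 * i) a) := by
  classical
  simp only [show ∀ (n : ℕ) (a : V), circuitCount G n a = Nat.card ↥(Cset G n a) from
    fun _ _ => rfl,
    show ∀ a : V, closedNbWalkCount G r a = Nat.card ↥(Wset G r a) from fun _ => rfl]
  rw [Finset.sum_congr rfl (fun a _ => card_split (G := G) r a), Finset.sum_add_distrib,
    main_aux q hreg r hr]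
end
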